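/- arXiv:1212.2739 — 4 statements merged into one kernel-verified Lean document; each statement's English description precedes it below -/
import Mathlib

section
/- In a free group F(S) on a set S, there exist finite quotients with no short relations: for every N ∈ ℕ and every finite set S, there is a finite group V generated by a copy of S such that every nontrivial word of length at most N in the generators S ∪ S⁻¹ represents a nontrivial element of V. -/
section Aux

variable {S : Type} [DecidableEq S]

lemma no_adj {L : List (S × Bool)} (hL : FreeGroup.reduce L = L) {i : ℕ}
    (h : i + 1 < L.length)
    (hf : (L.get ⟨i, by omega⟩).1 = (L.get ⟨i + 1, h⟩).1) :
    (L.get ⟨i, by omega⟩).2 = (L.get ⟨i + 1, h⟩).2 := by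
  by_contra hb
  refine FreeGroup.reduce.not (p := False) (L₁ := L) (L₂ := L.take i)
    (L₃ := L.drop (i + 2)) (x := (L.get ⟨i, by omega⟩).1) (b := (L.get ⟨i, by omega⟩).2) ?_
  rw [hL]
  have h2 : (L.get ⟨i + 1, h⟩) = ((L.get ⟨i, by omega⟩).1, !(L.get ⟨i, by omega⟩).2) := by
    refine Prod.ext hf.symm ?_
    cases hc : (L.get ⟨i, by omega⟩).2 <;> cases hc' : (L.get ⟨i + 1, h⟩).2 <;>
      simp_all
  conv_lhs => rw [← List.take_append_drop i L]
  congr 1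
  rw [List.drop_eq_getElem_cons (by omega : i < L.length),
    List.drop_eq_getElem_cons (by omega : i + 1 < L.length)]
  simp only [List.get_eq_getElem] at h2 ⊢
  rw [h2]

lemma no_adj' {L : List (S × Bool)} (hL : FreeGroup.reduce L = L)
    {i j : Fin L.length} (hji : (j : ℕ) = (i : ℕ) + 1)
    (hs : (L.get i).1 = (L.get j).1) : (L.get i).2 = (L.get j).2 := by
  have hlt : (i : ℕ) + 1 < L.length := hji ▸ j.isLt
  have hj' : (⟨(i : ℕ) + 1, hlt⟩ : Fin L.length) = j := Fin.ext hji.symm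
  have := no_adj hL hlt (by rw [hj']; simpa using hs)
  rwa [hj', Fin.eta] at this

open Classical in
noncomputable def extendPerm {α : Type} [Fintype α] {β : Type} (d r : β → α)
    (hd : Function.Injective d) (hr : Function.Injective r) : Equiv.Perm α :=
  ((Equiv.ofInjective d hd).symm.trans (Equiv.ofInjective r hr)).extendSubtype

lemma extendPerm_apply {α : Type} [Fintype α] {β : Type} (d r : β → α)
    (hd : Function.Injective d) (hr : Function.Injective r) (b : β) :
    extendPerm d r hd hr (d b) = r b := by
  unfold extendPerm
  classical
  rw [Equiv.extendSubtype_apply_of_mem _ _ ⟨b, rfl⟩]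
  simp

open Classical in
/-- the permutation of `Fin (L.length+1)` associated to a generator `s`. -/
noncomputable def sigmaPerm (L : List (S × Bool)) (hL : FreeGroup.reduce L = L)
    (s : S) : Equiv.Perm (Fin (L.length + 1)) :=
  let d : {i : Fin L.length // (L.get i).1 = s} → Fin (L.length + 1) :=
    fun i => if (L.get i.1).2 then i.1.succ else i.1.castSucc
  let r : {i : Fin L.length // (L.get i).1 = s} → Fin (L.length + 1) :=
    fun i => if (L.get i.1).2 then i.1.castSucc else i.1.succ
  have hd : Function.Injective d := by
    rintro ⟨i, hi⟩ ⟨j, hj⟩ hij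
    simp only [d] at hij
    split_ifs at hij with h1 h2 h2
    · exact Subtype.ext (Fin.succ_injective _ hij)
    · exfalso
      have hji : (j : ℕ) = i + 1 := by
        have := congrArg Fin.val hij; simp at this; omega
      have := no_adj' hL hji (hi.trans hj.symm)
      simp only [List.get_eq_getElem] at h1 h2
      simp [h1, h2] at this
    · exfalso
      have hij' : (i : ℕ) = j + 1 := by
        have := congrArg Fin.val hij; simp at this; omega
      have := no_adj' hL hij' (hj.trans hi.symm)
      simp only [List.get_eq_getElem] at h1 h2
      simp [h1, h2] at this
    · exact Subtype.ext (Fin.castSucc_injective _ hij)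
  have hr : Function.Injective r := by
    rintro ⟨i, hi⟩ ⟨j, hj⟩ hij
    simp only [r] at hij
    split_ifs at hij with h1 h2 h2
    · exact Subtype.ext (Fin.castSucc_injective _ hij)
    · exfalso
      have hij' : (i : ℕ) = j + 1 := by
        have := congrArg Fin.val hij; simp at this; omega
      have := no_adj' hL hij' (hj.trans hi.symm)
      simp only [List.get_eq_getElem] at h1 h2
      simp [h1, h2] at this
    · exfalso
      have hji : (j : ℕ) = i + 1 := by
        have := congrArg Fin.val hij; simp at this; omega
      have := no_adj' hL hji (hi.trans hj.symm)
      simp only [List.get_eq_getElem] at h1 h2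
      simp [h1, h2] at this
    · exact Subtype.ext (Fin.succ_injective _ hij)
  extendPerm d r hd hr

open Classical in
lemma sigmaPerm_apply (L : List (S × Bool)) (hL : FreeGroup.reduce L = L)
    (i : Fin L.length) :
    sigmaPerm L hL (L.get i).1
        (if (L.get i).2 then i.succ else i.castSucc) =
      (if (L.get i).2 then i.castSucc else i.succ) := by
  unfold sigmaPerm
  exact extendPerm_apply _ _ _ _
    (⟨i, rfl⟩ : {j : Fin L.length // (L.get j).1 = (L.get i).1})

open Classical in
lemma exists_finite_quotient_detecting (w : FreeGroup S) (hw : w ≠ 1) :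
    ∃ H : Subgroup (FreeGroup S), H.Normal ∧ H.FiniteIndex ∧ w ∉ H := by
  set L := w.toWord with hLdef
  have hL : FreeGroup.reduce L = L := FreeGroup.reduce_toWord w
  set n := L.length with hn
  let f : S → Equiv.Perm (Fin (n + 1)) := fun s => sigmaPerm L hL s
  let φ : FreeGroup S →* Equiv.Perm (Fin (n + 1)) := FreeGroup.lift f
  have key : ∀ (M : List (S × Bool)) (k : ℕ) (_hk : k + M.length = n), L.drop k = M →
      (M.map fun x => cond x.2 (f x.1) (f x.1)⁻¹).prod ⟨n, n.lt_succ_self⟩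
        = ⟨k, by omega⟩ := by
    intro M
    induction M with
    | nil =>
      intro k hk _
      simp only [List.length_nil, Nat.add_zero] at hk
      simp [hk]
    | cons a M' ih =>
      intro k hk hdrop
      have hkn : k < n := by simp only [List.length_cons] at hk; omega
      have hgetdrop : L.drop k = L.get ⟨k, hkn⟩ :: L.drop (k + 1) := by
        simpa using List.drop_eq_getElem_cons hkn
      rw [hgetdrop] at hdrop
      have ha : a = L.get ⟨k, hkn⟩ := (List.cons.inj hdrop).1.symm
      have hM' : L.drop (k + 1) = M' := (List.cons.inj hdrop).2
      have hk' : (k + 1) + M'.length = n := by simp only [List.length_cons] at hk; omega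
      rw [List.map_cons, List.prod_cons, Equiv.Perm.mul_apply, ih (k + 1) hk' hM']
      have hsp := sigmaPerm_apply L hL ⟨k, hkn⟩
      have hsucc : (⟨k, hkn⟩ : Fin n).succ = ⟨k + 1, by omega⟩ := rfl
      have hcast : (⟨k, hkn⟩ : Fin n).castSucc = ⟨k, by omega⟩ := rfl
      rw [ha]
      cases hb : (L.get ⟨k, hkn⟩).2 with
      | true =>
        rw [hb] at hsp
        rw [if_pos rfl, if_pos rfl] at hsp
        simp only [hb, cond_true]
        rw [← hsucc, ← hcast]
        exact hsp
      | false =>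
        rw [hb] at hsp
        rw [if_neg (by simp), if_neg (by simp)] at hsp
        simp only [hb, cond_false]
        rw [← hsucc, ← hcast, ← hsp]
        exact Equiv.symm_apply_apply _ _
  have hφw : φ w ⟨n, n.lt_succ_self⟩ = ⟨0, by omega⟩ := by
    have : φ w = (L.map fun x => cond x.2 (f x.1) (f x.1)⁻¹).prod := by
      conv_lhs => rw [show w = FreeGroup.mk L from (FreeGroup.mk_toWord).symm]
      exact FreeGroup.lift_mk
    rw [this]
    exact key L 0 (by simp [hn]) (by simp)
  have hnpos : 0 < n := by
    rcases Nat.eq_zero_or_pos n with h | h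
    · exact absurd (FreeGroup.toWord_eq_nil_iff.mp (List.length_eq_zero_iff.mp h)) hw
    · exact h
  refine ⟨φ.ker, MonoidHom.normal_ker φ, Subgroup.finiteIndex_ker φ, fun hmem => ?_⟩
  rw [MonoidHom.mem_ker] at hmem
  rw [hmem] at hφw
  have := congrArg Fin.val hφw
  simp at this
  omega

end Aux

theorem freeGroup_finite_quotient_no_short_relations (N : ℕ) (S : Type) [Finite S] :
    ∃ H : Subgroup (FreeGroup S), H.Normal ∧ H.FiniteIndex ∧
      ∀ w : FreeGroup S, w ≠ 1 →
        (@FreeGroup.toWord S (Classical.decEq S) w).length ≤ N → w ∉ H := by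
  letI := Classical.decEq S
  set B : Set (FreeGroup S) := {w | w ≠ 1 ∧ (FreeGroup.toWord w).length ≤ N} with hB
  have hBfin : B.Finite := by
    refine Set.Finite.of_finite_image (f := FreeGroup.toWord) ?_
      FreeGroup.toWord_injective.injOn
    refine (List.finite_length_le (S × Bool) N).subset ?_
    rintro _ ⟨w, ⟨_, h2⟩, rfl⟩
    exact h2
  choose Hf h1 h2 h3 using fun (w : B) =>
    exists_finite_quotient_detecting (S := S) w.1 w.2.1
  haveI := hBfin.to_subtype
  refine ⟨⨅ w : B, Hf w, ?_, ?_, ?_⟩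
  · constructor
    intro x hx g
    rw [Subgroup.mem_iInf] at hx ⊢
    exact fun i => (h1 i).conj_mem x (hx i) g
  · exact Subgroup.finiteIndex_iInf h2
  · intro w hw hlen hmem
    exact h3 ⟨w, hw, hlen⟩ (Subgroup.mem_iInf.1 hmem ⟨w, hw, hlen⟩)
end

section
/- In a graph product G of groups G_v over a finite simple graph Γ, for any subset J of the vertex set, the subgroup generated by the G_j for j ∈ J is isomorphic to the graph product of the groups G_j (j ∈ J) over the full subgraph of Γ induced on J. -/
/-- The defining relators of a graph product: commutators of elements of
adjacent vertex groups, inside the free product. -/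
def graphProductRels {V : Type*} (Γ : SimpleGraph V) (G : V → Type*)
    [∀ v, Group (G v)] : Subgroup (Monoid.CoprodI G) :=
  Subgroup.normalClosure
    {x | ∃ (v w : V) (gv : G v) (gw : G w), Γ.Adj v w ∧
      x = Monoid.CoprodI.of gv * Monoid.CoprodI.of gw *
          (Monoid.CoprodI.of gv)⁻¹ * (Monoid.CoprodI.of gw)⁻¹}

/-- The graph product of the groups `G v` over the simple graph `Γ`: the
quotient of their free product by the normal closure of the commutators of
elements of adjacent vertex groups. -/
def GraphProduct {V : Type*} (Γ : SimpleGraph V) (G : V → Type*)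
    [∀ v, Group (G v)] : Type _ :=
  Monoid.CoprodI G ⧸ graphProductRels Γ G

instance {V : Type*} (Γ : SimpleGraph V) (G : V → Type*) [∀ v, Group (G v)] :
    (graphProductRels Γ G).Normal :=
  Subgroup.normalClosure_normal

instance {V : Type*} (Γ : SimpleGraph V) (G : V → Type*) [∀ v, Group (G v)] :
    Group (GraphProduct Γ G) :=
  QuotientGroup.Quotient.group _

/-- The canonical embedding of a vertex group into the graph product. -/
def GraphProduct.of {V : Type*} (Γ : SimpleGraph V) (G : V → Type*)
    [∀ v, Group (G v)] (v : V) : G v →* GraphProduct Γ G :=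
  (QuotientGroup.mk' (graphProductRels Γ G)).comp Monoid.CoprodI.of

section Aux
variable {V : Type*} {Γ : SimpleGraph V} {G : V → Type*} [∀ v, Group (G v)]
  {H : Type*} [Group H]

def GraphProduct.lift (f : ∀ v, G v →* H)
    (hf : ∀ v w, Γ.Adj v w → ∀ (gv : G v) (gw : G w), Commute (f v gv) (f w gw)) :
    GraphProduct Γ G →* H :=
  QuotientGroup.lift _ (Monoid.CoprodI.lift f) (by
    intro x hx
    refine Subgroup.normalClosure_le_normal ?_ hx
    rintro _ ⟨v, w, gv, gw, hadj, rfl⟩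
    have := hf v w hadj gv gw
    simp only [MonoidHom.mem_ker, SetLike.mem_coe, map_mul, map_inv,
      Monoid.CoprodI.lift_of]
    rw [this.eq]
    group)

@[simp] lemma GraphProduct.lift_of (f : ∀ v, G v →* H)
    (hf : ∀ v w, Γ.Adj v w → ∀ (gv : G v) (gw : G w), Commute (f v gv) (f w gw))
    (v : V) (g : G v) :
    GraphProduct.lift f hf (GraphProduct.of Γ G v g) = f v g := by
  show Monoid.CoprodI.lift f (Monoid.CoprodI.of g) = f v g
  simp

lemma GraphProduct.of_commute {v w : V} (h : Γ.Adj v w) (gv : G v) (gw : G w) :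
    Commute (GraphProduct.of Γ G v gv) (GraphProduct.of Γ G w gw) := by
  rw [← commutatorElement_eq_one_iff_commute]
  have : (QuotientGroup.mk' (graphProductRels Γ G))
      (Monoid.CoprodI.of gv * Monoid.CoprodI.of gw *
        (Monoid.CoprodI.of gv)⁻¹ * (Monoid.CoprodI.of gw)⁻¹) = 1 := by
    rw [QuotientGroup.mk'_apply, QuotientGroup.eq_one_iff]
    exact Subgroup.subset_normalClosure ⟨v, w, gv, gw, h, rfl⟩
  rw [commutatorElement_def]
  simp only [map_mul, map_inv] at this
  exact this

lemma GraphProduct.hom_ext {f g : GraphProduct Γ G →* H}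
    (h : ∀ v, f.comp (GraphProduct.of Γ G v) = g.comp (GraphProduct.of Γ G v)) :
    f = g := by
  apply QuotientGroup.monoidHom_ext
  exact Monoid.CoprodI.ext_hom _ _ fun v => by
    ext x; exact DFunLike.congr_fun (h v) x

lemma GraphProduct.iSup_range :
    (⨆ v, (GraphProduct.of Γ G v).range : Subgroup (GraphProduct Γ G)) = ⊤ := by
  rw [eq_top_iff]
  rintro x -
  obtain ⟨y, rfl⟩ := QuotientGroup.mk'_surjective (graphProductRels Γ G) x
  induction y using Monoid.CoprodI.induction_on with
  | one => exact Subgroup.one_mem _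
  | of v g =>
      exact Subgroup.mem_iSup_of_mem v ⟨g, rfl⟩
  | mul a b ha hb =>
      rw [map_mul]; exact Subgroup.mul_mem _ ha hb

end Aux

section Sub
variable {V : Type*} (Γ : SimpleGraph V) (G : V → Type*) [∀ v, Group (G v)]
  (J : Set V)

set_option maxHeartbeats 1000000 in
/-- The map from the induced graph product into the big graph product. -/
def graphProductIncl :
    GraphProduct (Γ.induce J) (fun j : J => G j) →* GraphProduct Γ G :=
  GraphProduct.lift (fun j : J => GraphProduct.of Γ G j)
    (fun _ _ h gv gw => GraphProduct.of_commute (SimpleGraph.comap_adj.mp h) gv gw)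

@[simp] lemma graphProductIncl_of (j : J) (g : G j) :
    graphProductIncl Γ G J (GraphProduct.of (Γ.induce J) (fun j : J => G j) j g) =
      GraphProduct.of Γ G j g :=
  GraphProduct.lift_of _ _ _ _

open Classical in
set_option maxHeartbeats 1000000 in
/-- The retraction from the big graph product onto the induced graph product. -/
noncomputable def graphProductRetr :
    GraphProduct Γ G →* GraphProduct (Γ.induce J) (fun j : J => G j) :=
  GraphProduct.lift
    (fun v => if h : v ∈ J then GraphProduct.of (Γ.induce J) (fun j : J => G j) ⟨v, h⟩ else 1)
    (by
      intro v w hadj gv gw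
      by_cases hv : v ∈ J
      · by_cases hw : w ∈ J
        · simp only [dif_pos hv, dif_pos hw]
          exact GraphProduct.of_commute (Γ := Γ.induce J) (G := fun j : J => G j)
            (v := ⟨v, hv⟩) (w := ⟨w, hw⟩) (SimpleGraph.comap_adj.mpr hadj) gv gw
        · simp [dif_neg hw, Commute, SemiconjBy]
      · simp [dif_neg hv, Commute, SemiconjBy])

set_option maxHeartbeats 1000000 in
lemma graphProductRetr_incl :
    (graphProductRetr Γ G J).comp (graphProductIncl Γ G J) = MonoidHom.id _ := by
  apply GraphProduct.hom_ext
  intro v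
  ext g
  simp only [MonoidHom.comp_apply, MonoidHom.id_apply, graphProductIncl_of]
  rw [graphProductRetr, GraphProduct.lift_of]
  simp [dif_pos v.2]

lemma graphProductIncl_injective : Function.Injective (graphProductIncl Γ G J) := by
  intro a b hab
  have h1 := DFunLike.congr_fun (graphProductRetr_incl Γ G J) a
  have h2 := DFunLike.congr_fun (graphProductRetr_incl Γ G J) b
  simp only [MonoidHom.comp_apply, MonoidHom.id_apply] at h1 h2
  rw [← h1, ← h2, hab]

set_option maxHeartbeats 1000000 in
lemma graphProductIncl_range :
    (graphProductIncl Γ G J).range = ⨆ j ∈ J, (GraphProduct.of Γ G j).range := by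
  apply le_antisymm
  · rw [MonoidHom.range_eq_map,
      ← GraphProduct.iSup_range (Γ := Γ.induce J) (G := fun j : J => G j),
      Subgroup.map_iSup]
    refine iSup_le fun j => ?_
    rintro _ ⟨x, hx, rfl⟩
    obtain ⟨g, rfl⟩ := hx
    rw [graphProductIncl_of]
    have hle : (GraphProduct.of Γ G (↑j : V)).range ≤
        ⨆ j ∈ J, (GraphProduct.of Γ G j).range :=
      le_iSup₂ (f := fun (j : V) (_ : j ∈ J) => (GraphProduct.of Γ G j).range) (↑j) j.2
    exact hle ⟨g, rfl⟩
  · refine iSup₂_le fun j hj => ?_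
    rintro _ ⟨g, rfl⟩
    exact ⟨GraphProduct.of (Γ.induce J) (fun j : J => G j) ⟨j, hj⟩ g,
      graphProductIncl_of Γ G J ⟨j, hj⟩ g⟩

end Sub

/-- In a graph product over a finite simple graph, the subgroup generated by the
vertex groups `G j` for `j ∈ J` is isomorphic to the graph product over the full
subgraph induced on `J`. -/
theorem graphProduct_subgroup_iso {V : Type} [Fintype V] (Γ : SimpleGraph V)
    (G : V → Type) [∀ v, Group (G v)] (J : Set V) :
    Nonempty
      ((⨆ j ∈ J, (GraphProduct.of Γ G j).range : Subgroup (GraphProduct Γ G)) ≃*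
        GraphProduct (Γ.induce J) (fun j : J => G j)) := ⟨(MulEquiv.subgroupCongr (graphProductIncl_range Γ G J).symm).trans
    (MonoidHom.ofInjective (graphProductIncl_injective Γ G J)).symm⟩
end

section
/- Every element g of a graph product that is nontrivial has a well-defined syllable length: every minimal-length expression of g as a product g₁⋯g_l of nontrivial vertex-group elements has the same length l, and any two such minimal expressions are related by a sequence of swaps of adjacent syllables lying in commuting vertex groups. -/
/-- `IsExpr Γ G g l` says that the list `l` of nontrivial vertex-group elements
(syllables) is an expression for `g` in the graph product. -/
def IsExpr {V : Type*} (Γ : SimpleGraph V) (G : V → Type*) [∀ v, Group (G v)]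
    (g : GraphProduct Γ G) (l : List (Σ v, G v)) : Prop :=
  (∀ p ∈ l, p.2 ≠ 1) ∧ (l.map fun p => GraphProduct.of Γ G p.1 p.2).prod = g

/-- One swap of two adjacent syllables lying in commuting (adjacent) vertex
groups. -/
def SwapStep {V : Type*} (Γ : SimpleGraph V) (G : V → Type*) [∀ v, Group (G v)] :
    List (Σ v, G v) → List (Σ v, G v) → Prop := fun l l' =>
  ∃ (l₁ l₂ : List (Σ v, G v)) (p q : Σ v, G v), Γ.Adj p.1 q.1 ∧
    l = l₁ ++ p :: q :: l₂ ∧ l' = l₁ ++ q :: p :: l₂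


namespace GreenAux

open Relation

variable {V : Type} {G : V → Type} [∀ v, Group (G v)]

open scoped Classical
set_option linter.unusedSectionVars false

/-- Shuffle equivalence: reflexive-transitive closure of swaps. -/
abbrev Sh (Γ : SimpleGraph V) : List (Σ v, G v) → List (Σ v, G v) → Prop :=
  Relation.ReflTransGen (SwapStep Γ G)

variable {Γ : SimpleGraph V}

lemma swapStep_symm {w w' : List (Σ v, G v)} (h : SwapStep Γ G w w') :
    SwapStep Γ G w' w := by
  obtain ⟨l₁, l₂, p, q, hadj, rfl, rfl⟩ := h
  exact ⟨l₁, l₂, q, p, hadj.symm, rfl, rfl⟩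

lemma sh_symm {w w' : List (Σ v, G v)} (h : Sh Γ w w') : Sh Γ w' w :=
  haveI : Std.Symm (SwapStep Γ G) := ⟨fun _ _ => swapStep_symm⟩
  Relation.ReflTransGen.symmetric.symm _ _ h

lemma swapStep_cons (x : (Σ v, G v)) {w w'} (h : SwapStep Γ G w w') :
    SwapStep Γ G (x :: w) (x :: w') := by
  obtain ⟨l₁, l₂, p, q, hadj, rfl, rfl⟩ := h
  exact ⟨x :: l₁, l₂, p, q, hadj, rfl, rfl⟩

lemma sh_cons (x : (Σ v, G v)) {w w'} (h : Sh Γ w w') : Sh Γ (x :: w) (x :: w') :=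
  Relation.ReflTransGen.lift (List.cons x) (fun _ _ => swapStep_cons x) _ _ h

lemma sh_append_left (a : List (Σ v, G v)) {w w'} (h : Sh Γ w w') :
    Sh Γ (a ++ w) (a ++ w') := by
  induction a with
  | nil => exact h
  | cons x t ih => exact sh_cons x ih

lemma swapStep_append_right (b : List (Σ v, G v)) {w w'} (h : SwapStep Γ G w w') :
    SwapStep Γ G (w ++ b) (w' ++ b) := by
  obtain ⟨l₁, l₂, p, q, hadj, rfl, rfl⟩ := h
  exact ⟨l₁, l₂ ++ b, p, q, hadj, by simp, by simp⟩

lemma sh_append_right (b : List (Σ v, G v)) {w w'} (h : Sh Γ w w') :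
    Sh Γ (w ++ b) (w' ++ b) :=
  Relation.ReflTransGen.lift (· ++ b) (fun _ _ => swapStep_append_right b) _ _ h

lemma swapStep_perm {w w' : List (Σ v, G v)} (h : SwapStep Γ G w w') : w.Perm w' := by
  obtain ⟨l₁, l₂, p, q, _, rfl, rfl⟩ := h
  exact List.Perm.append_left l₁ (List.Perm.swap q p l₂)

lemma sh_perm {w w' : List (Σ v, G v)} (h : Sh Γ w w') : w.Perm w' := by
  induction h with
  | refl => exact List.Perm.refl _
  | tail _ hstep ih => exact ih.trans (swapStep_perm hstep)

lemma sh_length {w w' : List (Σ v, G v)} (h : Sh Γ w w') : w.length = w'.length :=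
  (sh_perm h).length_eq

/-- Fronting: a letter whose left context is entirely adjacent to it can be
moved to the front. -/
lemma front_shuffle {l₁ : List (Σ v, G v)} (p : (Σ v, G v)) (l₂ : List (Σ v, G v))
    (h : ∀ q ∈ l₁, Γ.Adj q.1 p.1) : Sh Γ (l₁ ++ p :: l₂) (p :: (l₁ ++ l₂)) := by
  induction l₁ with
  | nil => exact Relation.ReflTransGen.refl
  | cons x t ih =>
    have h1 : Sh Γ (x :: (t ++ p :: l₂)) (x :: (p :: (t ++ l₂))) :=
      sh_cons x (ih fun q hq => h q (List.mem_cons_of_mem _ hq))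
    have h2 : SwapStep Γ G (x :: p :: (t ++ l₂)) (p :: x :: (t ++ l₂)) :=
      ⟨[], t ++ l₂, x, p, h x List.mem_cons_self, rfl, rfl⟩
    exact h1.trans (Relation.ReflTransGen.single h2)

/-- Projection onto the letters with vertex `u₁` or `u₂`. -/
noncomputable def proj (u₁ u₂ : V) : List (Σ v, G v) → List (Σ v, G v)
  | [] => []
  | x :: w => if x.1 = u₁ ∨ x.1 = u₂ then x :: proj u₁ u₂ w else proj u₁ u₂ w

lemma proj_append (u₁ u₂ : V) (a b : List (Σ v, G v)) :
    proj u₁ u₂ (a ++ b) = proj u₁ u₂ a ++ proj u₁ u₂ b := by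
  induction a with
  | nil => rfl
  | cons x t ih =>
    by_cases h : x.1 = u₁ ∨ x.1 = u₂ <;> simp [proj, h, ih]

lemma sh_proj {u₁ u₂ : V} (hna : ¬ Γ.Adj u₁ u₂) {w w' : List (Σ v, G v)} (h : Sh Γ w w') :
    proj u₁ u₂ w = proj u₁ u₂ w' := by
  induction h with
  | refl => rfl
  | tail _ hstep ih =>
    refine ih.trans ?_
    obtain ⟨l₁, l₂, p, q, hadj, rfl, rfl⟩ := hstep
    rw [proj_append, proj_append]
    congr 1
    have hpq : ¬ ((p.1 = u₁ ∨ p.1 = u₂) ∧ (q.1 = u₁ ∨ q.1 = u₂)) := by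
      rintro ⟨hp | hp, hq | hq⟩ <;> rw [hp, hq] at hadj
      · exact Γ.loopless.irrefl _ hadj
      · exact hna hadj
      · exact hna hadj.symm
      · exact Γ.loopless.irrefl _ hadj
    by_cases hp : p.1 = u₁ ∨ p.1 = u₂ <;> by_cases hq : q.1 = u₁ ∨ q.1 = u₂
    · exact absurd ⟨hp, hq⟩ hpq
    all_goals simp [proj, hp, hq]

lemma proj_eq_cons {u₁ u₂ : V} {w : List (Σ v, G v)} {a s}
    (h : proj u₁ u₂ w = a :: s) :
    ∃ l₁ l₂, w = l₁ ++ a :: l₂ ∧ (∀ x ∈ l₁, ¬(x.1 = u₁ ∨ x.1 = u₂))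
      ∧ s = proj u₁ u₂ l₂ := by
  induction w with
  | nil => simp [proj] at h
  | cons x t ih =>
    by_cases hx : x.1 = u₁ ∨ x.1 = u₂
    · rw [proj, if_pos hx] at h
      obtain ⟨rfl, rfl⟩ : x = a ∧ proj u₁ u₂ t = s := by
        constructor <;> simp_all
      exact ⟨[], t, rfl, by simp, rfl⟩
    · rw [proj, if_neg hx] at h
      obtain ⟨l₁, l₂, rfl, h1, h2⟩ := ih h
      exact ⟨x :: l₁, l₂, rfl, by
        intro y hy
        rcases List.mem_cons.1 hy with rfl | hy
        · exact hx
        · exact h1 y hy, h2⟩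

lemma mem_of_mem_proj {u₁ u₂ : V} {x : (Σ v, G v)} {l : List (Σ v, G v)}
    (h : x ∈ proj u₁ u₂ l) : x ∈ l := by
  induction l with
  | nil => simpa [proj] using h
  | cons y t ih =>
    by_cases hy : y.1 = u₁ ∨ y.1 = u₂
    · rw [proj, if_pos hy] at h
      rcases List.mem_cons.1 h with rfl | h
      · exact List.mem_cons_self
      · exact List.mem_cons_of_mem _ (ih h)
    · rw [proj, if_neg hy] at h
      exact List.mem_cons_of_mem _ (ih h)

lemma proj_ne_nil {u₁ u₂ : V} {q : (Σ v, G v)} {l : List (Σ v, G v)}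
    (hq : q ∈ l) (h : q.1 = u₁ ∨ q.1 = u₂) : proj u₁ u₂ l ≠ [] := by
  induction l with
  | nil => simp at hq
  | cons y t ih =>
    rcases List.mem_cons.1 hq with rfl | hq
    · rw [proj, if_pos h]; simp
    · by_cases hy : y.1 = u₁ ∨ y.1 = u₂
      · rw [proj, if_pos hy]; simp
      · rw [proj, if_neg hy]; exact ih hq

/-- If all pair projections of `a :: t` and `w'` agree, then `w'` decomposes
with the letter `a` preceded only by letters adjacent to it. -/
lemma decomp_of_proj {a : (Σ v, G v)} {t w' : List (Σ v, G v)}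
    (hproj : ∀ u₁ u₂ : V, ¬ Γ.Adj u₁ u₂ →
      proj u₁ u₂ (a :: t) = proj u₁ u₂ w') :
    ∃ l₁ l₂, w' = l₁ ++ a :: l₂ ∧ ∀ q ∈ l₁, Γ.Adj q.1 a.1 := by
  have h1 := hproj a.1 a.1 (Γ.loopless.irrefl _)
  rw [proj, if_pos (Or.inl rfl)] at h1
  obtain ⟨l₁, l₂, rfl, hl₁, _⟩ := proj_eq_cons h1.symm
  refine ⟨l₁, l₂, rfl, fun q hq => ?_⟩
  by_contra hqa
  have hna : ¬ Γ.Adj a.1 q.1 := fun h => hqa h.symm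
  have h2 := hproj a.1 q.1 hna
  rw [proj, if_pos (Or.inl rfl), proj_append] at h2
  cases hp : proj a.1 q.1 l₁ with
  | nil => exact proj_ne_nil hq (Or.inr rfl) hp
  | cons x s =>
    rw [hp, List.cons_append] at h2
    have hax : a = x := by injection h2
    have : x ∈ l₁ := mem_of_mem_proj (hp ▸ (List.mem_cons_self : x ∈ x :: s))
    exact hl₁ x this (Or.inl (hax ▸ rfl))

/-- The projection lemma: words with equal pair projections are
shuffle-equivalent. -/
lemma projLemma {w w' : List (Σ v, G v)}
    (h : ∀ u₁ u₂ : V, ¬ Γ.Adj u₁ u₂ → proj u₁ u₂ w = proj u₁ u₂ w') :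
    Sh Γ w w' := by
  induction w generalizing w' with
  | nil =>
    cases w' with
    | nil => exact Relation.ReflTransGen.refl
    | cons x t =>
      have := h x.1 x.1 (Γ.loopless.irrefl _)
      rw [proj, proj, if_pos (Or.inl rfl)] at this
      exact absurd this (by simp)
  | cons a t ih =>
    obtain ⟨l₁, l₂, rfl, hadj⟩ := decomp_of_proj h
    have hsh : Sh Γ (l₁ ++ a :: l₂) (a :: (l₁ ++ l₂)) := front_shuffle a l₂ hadj
    have ht : ∀ u₁ u₂ : V, ¬ Γ.Adj u₁ u₂ → proj u₁ u₂ t = proj u₁ u₂ (l₁ ++ l₂) := by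
      intro u₁ u₂ hna
      have h3 := (h u₁ u₂ hna).trans (sh_proj hna hsh)
      by_cases hx : a.1 = u₁ ∨ a.1 = u₂ <;> rw [proj, proj] at h3 <;>
        [rw [if_pos hx, if_pos hx] at h3; rw [if_neg hx, if_neg hx] at h3]
      · injection h3
      · exact h3
    exact (sh_cons a (ih ht)).trans (sh_symm hsh)

/-- Left cancellation for shuffle equivalence. -/
lemma sh_cancel {a : (Σ v, G v)} {r r' : List (Σ v, G v)}
    (h : Sh Γ (a :: r) (a :: r')) : Sh Γ r r' := by
  apply projLemma
  intro u₁ u₂ hna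
  have h3 := sh_proj hna h
  by_cases hx : a.1 = u₁ ∨ a.1 = u₂ <;> rw [proj, proj] at h3 <;>
    [rw [if_pos hx, if_pos hx] at h3; rw [if_neg hx, if_neg hx] at h3]
  · injection h3
  · exact h3

/-- If `w` shuffles to `a :: r` then `w` decomposes with the letter `a`
preceded only by adjacent letters, and the rest shuffles to `r`. -/
lemma decomp_of_sh {w : List (Σ v, G v)} {a r} (h : Sh Γ w (a :: r)) :
    ∃ l₁ l₂, w = l₁ ++ a :: l₂ ∧ (∀ q ∈ l₁, Γ.Adj q.1 a.1) ∧ Sh Γ (l₁ ++ l₂) r := by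
  obtain ⟨l₁, l₂, rfl, hadj⟩ :=
    decomp_of_proj (fun u₁ u₂ hna => (sh_proj hna h).symm)
  refine ⟨l₁, l₂, rfl, hadj, ?_⟩
  exact sh_cancel ((sh_symm (front_shuffle a l₂ hadj)).trans h)

/-- Overlap of two single-letter decompositions of the same list. -/
lemma cons_overlap {α : Type*} {l₁ l₂ m₁ m₂ : List α} {x y : α}
    (h : l₁ ++ x :: l₂ = m₁ ++ y :: m₂) :
    (l₁ = m₁ ∧ x = y ∧ l₂ = m₂) ∨ (∃ t, m₁ = l₁ ++ x :: t ∧ l₂ = t ++ y :: m₂) ∨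
      (∃ t, l₁ = m₁ ++ y :: t ∧ m₂ = t ++ x :: l₂) := by
  induction l₁ generalizing m₁ with
  | nil =>
    cases m₁ with
    | nil =>
      simp only [List.nil_append, List.cons.injEq] at h
      exact Or.inl ⟨rfl, h.1, h.2⟩
    | cons z m =>
      simp only [List.nil_append, List.cons_append, List.cons.injEq] at h
      exact Or.inr (Or.inl ⟨m, by simp [h.1], h.2⟩)
  | cons a t ih =>
    cases m₁ with
    | nil =>
      simp only [List.cons_append, List.nil_append, List.cons.injEq] at h
      exact Or.inr (Or.inr ⟨t, by simp [h.1], h.2.symm⟩)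
    | cons z m =>
      simp only [List.cons_append, List.cons.injEq] at h
      obtain ⟨rfl, h⟩ := h
      rcases ih h with ⟨rfl, rfl, rfl⟩ | ⟨s, rfl, rfl⟩ | ⟨s, rfl, rfl⟩
      · exact Or.inl ⟨rfl, rfl, rfl⟩
      · exact Or.inr (Or.inl ⟨s, rfl, rfl⟩)
      · exact Or.inr (Or.inr ⟨s, rfl, rfl⟩)

/-- `Frontable Γ v w`: some `v`-letter of `w` can be shuffled to the front. -/
def Frontable (Γ : SimpleGraph V) (v : V) (w : List (Σ v, G v)) : Prop :=
  ∃ (l₁ : List (Σ v, G v)) (b : G v) (l₂ : List (Σ v, G v)),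
    w = l₁ ++ ⟨v, b⟩ :: l₂ ∧ ∀ q ∈ l₁, Γ.Adj q.1 v

lemma frontable_uniq {v : V} {l₁ m₁ l₂ m₂ : List (Σ v, G v)} {b c : G v}
    (he : l₁ ++ ⟨v, b⟩ :: l₂ = m₁ ++ ⟨v, c⟩ :: m₂)
    (h₁ : ∀ q ∈ l₁, Γ.Adj q.1 v) (h₂ : ∀ q ∈ m₁, Γ.Adj q.1 v) :
    l₁ = m₁ ∧ b = c ∧ l₂ = m₂ := by
  rcases cons_overlap he with ⟨rfl, hbc, rfl⟩ | ⟨t, rfl, rfl⟩ | ⟨t, rfl, rfl⟩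
  · obtain ⟨rfl⟩ : b = c := by simpa using hbc
    exact ⟨rfl, rfl, rfl⟩
  · exact absurd (h₂ ⟨v, b⟩ (by simp)) (Γ.loopless.irrefl v)
  · exact absurd (h₁ ⟨v, c⟩ (by simp)) (Γ.loopless.irrefl v)

/-- Multiplication of a vertex-group element onto a word: merge into a
frontable `v`-letter if possible, otherwise prepend. -/
noncomputable def mulW (Γ : SimpleGraph V) (v : V) (g : G v)
    (w : List (Σ v, G v)) : List (Σ v, G v) :=
  if h : Frontable Γ v w then
    if g * h.choose_spec.choose = 1 then
      h.choose ++ h.choose_spec.choose_spec.choose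
    else h.choose ++ ⟨v, g * h.choose_spec.choose⟩ :: h.choose_spec.choose_spec.choose
  else if g = 1 then w else ⟨v, g⟩ :: w

lemma mulW_of_decomp {v : V} {w l₁ l₂ : List (Σ v, G v)} {b : G v}
    (hw : w = l₁ ++ ⟨v, b⟩ :: l₂)
    (hadj : ∀ q ∈ l₁, Γ.Adj q.1 v) (g : G v) :
    mulW Γ v g w =
      if g * b = 1 then l₁ ++ l₂ else l₁ ++ ⟨v, g * b⟩ :: l₂ := by
  have hf : Frontable Γ v w := ⟨l₁, b, l₂, hw, hadj⟩
  rw [mulW, dif_pos hf]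
  obtain ⟨he, hadj'⟩ := hf.choose_spec.choose_spec.choose_spec
  obtain ⟨h1, h2, h3⟩ := frontable_uniq (he.symm.trans hw) hadj' hadj
  subst h1
  subst h2
  subst h3
  rfl

lemma mulW_of_not_frontable {v : V} {w : List (Σ v, G v)} (h : ¬ Frontable Γ v w)
    (g : G v) : mulW Γ v g w = if g = 1 then w else ⟨v, g⟩ :: w := dif_neg h

lemma frontable_of_sh {v : V} {w w' : List (Σ v, G v)} (hsh : Sh Γ w w')
    (h : Frontable Γ v w) : Frontable Γ v w' := by
  obtain ⟨l₁, b, l₂, rfl, hadj⟩ := h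
  have h1 : Sh Γ w' (⟨v, b⟩ :: (l₁ ++ l₂)) :=
    (sh_symm hsh).trans (front_shuffle _ _ hadj)
  obtain ⟨m₁, m₂, rfl, hadj', -⟩ := decomp_of_sh h1
  exact ⟨m₁, b, m₂, rfl, hadj'⟩

/-- All syllables nontrivial. -/
def NT (w : List (Σ v, G v)) : Prop := ∀ p ∈ w, p.2 ≠ 1

lemma nt_of_sh {w w' : List (Σ v, G v)} (hsh : Sh Γ w w') (h : NT w) : NT w' :=
  fun p hp => h p ((sh_perm hsh).mem_iff.2 hp)

/-- The word has two adjacent letters from the same vertex group. -/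
def HasPair (w : List (Σ v, G v)) : Prop :=
  ∃ (l₁ : List (Σ v, G v)) (p q : Σ v, G v) (l₂ : List (Σ v, G v)),
    w = l₁ ++ p :: q :: l₂ ∧ p.1 = q.1

/-- The word can be shuffled to one with two adjacent same-vertex letters. -/
def Bad (Γ : SimpleGraph V) (w : List (Σ v, G v)) : Prop :=
  ∃ z, Sh Γ w z ∧ HasPair z

/-- Reduced word: nontrivial syllables, and no shuffle produces two adjacent
same-vertex letters. -/
def Reduced (Γ : SimpleGraph V) (w : List (Σ v, G v)) : Prop :=
  NT w ∧ ¬ Bad Γ w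

lemma bad_of_sh {w w' : List (Σ v, G v)} (hsh : Sh Γ w w') (h : Bad Γ w') :
    Bad Γ w := by
  obtain ⟨z, h1, h2⟩ := h
  exact ⟨z, hsh.trans h1, h2⟩

lemma bad_cons {x : (Σ v, G v)} {t : List (Σ v, G v)} (h : Bad Γ t) :
    Bad Γ (x :: t) := by
  obtain ⟨z, h1, l₁, p, q, l₂, rfl, hpq⟩ := h
  exact ⟨x :: (l₁ ++ p :: q :: l₂), sh_cons x h1, x :: l₁, p, q, l₂, rfl, hpq⟩

lemma reduced_tail {x : (Σ v, G v)} {t : List (Σ v, G v)}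
    (h : Reduced Γ (x :: t)) : Reduced Γ t :=
  ⟨fun p hp => h.1 p (List.mem_cons_of_mem _ hp), fun hb => h.2 (bad_cons hb)⟩

lemma reduced_nil : Reduced Γ ([] : List (Σ v, G v)) := by
  refine ⟨by simp [NT], ?_⟩
  rintro ⟨z, h1, l₁, p, q, l₂, rfl, -⟩
  have := sh_length h1
  simp at this

lemma swap_transport {z z₁ w' : List (Σ v, G v)}
    (hm : z.map Sigma.fst = w'.map Sigma.fst) (h : SwapStep Γ G z z₁) :
    ∃ z₁', SwapStep Γ G w' z₁' ∧ z₁.map Sigma.fst = z₁'.map Sigma.fst := by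
  obtain ⟨l₁, l₂, p, q, hadj, rfl, rfl⟩ := h
  rw [List.map_append, List.map_cons, List.map_cons] at hm
  obtain ⟨s, t, rfl, hs, ht⟩ := List.map_eq_append_iff.1 hm.symm
  obtain ⟨p', t', rfl, hp', ht'⟩ := List.map_eq_cons_iff.1 ht
  obtain ⟨q', t₂, rfl, hq', ht₂⟩ := List.map_eq_cons_iff.1 ht'
  refine ⟨s ++ q' :: p' :: t₂, ⟨s, t₂, p', q', by rw [hp', hq']; exact hadj, rfl, rfl⟩, ?_⟩
  simp [hs, hp', hq', ht₂]

lemma sh_transport {w w' z : List (Σ v, G v)}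
    (hm : w.map Sigma.fst = w'.map Sigma.fst) (h : Sh Γ w z) :
    ∃ z', Sh Γ w' z' ∧ z.map Sigma.fst = z'.map Sigma.fst := by
  induction h with
  | refl => exact ⟨w', Relation.ReflTransGen.refl, hm⟩
  | tail _ hstep ih =>
    obtain ⟨z', h1, h2⟩ := ih
    obtain ⟨z₁', h3, h4⟩ := swap_transport h2 hstep
    exact ⟨z₁', h1.tail h3, h4⟩

lemma hasPair_transport {z z' : List (Σ v, G v)}
    (hm : z.map Sigma.fst = z'.map Sigma.fst) (h : HasPair z) : HasPair z' := by
  obtain ⟨l₁, p, q, l₂, rfl, hpq⟩ := h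
  rw [List.map_append, List.map_cons, List.map_cons] at hm
  obtain ⟨s, t, rfl, hs, ht⟩ := List.map_eq_append_iff.1 hm.symm
  obtain ⟨p', t', rfl, hp', ht'⟩ := List.map_eq_cons_iff.1 ht
  obtain ⟨q', t₂, rfl, hq', ht₂⟩ := List.map_eq_cons_iff.1 ht'
  exact ⟨s, p', q', t₂, rfl, by rw [hp', hq', hpq]⟩

lemma bad_transport {w w' : List (Σ v, G v)}
    (hm : w.map Sigma.fst = w'.map Sigma.fst) (h : Bad Γ w) : Bad Γ w' := by
  obtain ⟨z, h1, h2⟩ := h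
  obtain ⟨z', h3, h4⟩ := sh_transport hm h1
  exact ⟨z', h3, hasPair_transport h4 h2⟩

lemma frontable_transport {v : V} {w w' : List (Σ v, G v)}
    (hm : w.map Sigma.fst = w'.map Sigma.fst) (h : Frontable Γ v w) :
    Frontable Γ v w' := by
  obtain ⟨l₁, b, l₂, rfl, hadj⟩ := h
  rw [List.map_append, List.map_cons] at hm
  obtain ⟨s, t, rfl, hs, ht⟩ := List.map_eq_append_iff.1 hm.symm
  obtain ⟨x, t₂, rfl, hx, ht₂⟩ := List.map_eq_cons_iff.1 ht
  obtain ⟨xv, xg⟩ := x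
  have hxv : xv = v := hx
  subst hxv
  refine ⟨s, xg, t₂, rfl, fun q hq => ?_⟩
  have h5 : q.1 ∈ s.map Sigma.fst := List.mem_map_of_mem hq
  rw [hs] at h5
  obtain ⟨q', hq', he⟩ := List.mem_map.1 h5
  exact he ▸ hadj q' hq'

lemma frontable_insert {v : V} {x : (Σ v, G v)} {l₁ l₂ : List (Σ v, G v)}
    (hx : Γ.Adj x.1 v) (h : Frontable Γ v (l₁ ++ l₂)) :
    Frontable Γ v (l₁ ++ x :: l₂) := by
  obtain ⟨m₁, c, m₂, he, hadj⟩ := h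
  rcases List.append_eq_append_iff.1 he with ⟨s, h1, h2⟩ | ⟨s, h1, h2⟩
  · -- h1 : m₁ = l₁ ++ s, h2 : l₂ = s ++ ⟨v,c⟩ :: m₂
    refine ⟨l₁ ++ x :: s, c, m₂, by rw [h2]; simp, fun q hq => ?_⟩
    simp only [List.mem_append, List.mem_cons] at hq
    rcases hq with hq | rfl | hq
    · exact hadj q (by rw [h1]; simp [hq])
    · exact hx
    · exact hadj q (by rw [h1]; simp [hq])
  · -- h1 : l₁ = m₁ ++ s, h2 : ⟨v,c⟩ :: m₂ = s ++ l₂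
    cases s with
    | nil =>
      have h2' : l₂ = ⟨v, c⟩ :: m₂ := by simpa using h2.symm
      have h1' : l₁ = m₁ := by simpa using h1
      refine ⟨l₁ ++ [x], c, m₂, by rw [h2']; simp, fun q hq => ?_⟩
      simp only [List.mem_append, List.mem_singleton] at hq
      rcases hq with hq | rfl
      · exact hadj q (by rw [← h1']; exact hq)
      · exact hx
    | cons y s' =>
      have hy : (⟨v, c⟩ : Σ v, G v) = y := by injection h2
      have hm₂ : m₂ = s' ++ l₂ := by injection h2
      refine ⟨m₁, c, s' ++ x :: l₂, ?_, hadj⟩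
      rw [h1, ← hy]
      simp

/-- The product of a word in the graph product. -/
def prodW (Γ : SimpleGraph V) (w : List (Σ v, G v)) : GraphProduct Γ G :=
  (w.map fun p => GraphProduct.of Γ G p.1 p.2).prod

lemma prodW_append (a b : List (Σ v, G v)) :
    prodW Γ (a ++ b) = prodW Γ a * prodW Γ b := by
  simp [prodW]

lemma prodW_cons (p : (Σ v, G v)) (t : List (Σ v, G v)) :
    prodW Γ (p :: t) = GraphProduct.of Γ G p.1 p.2 * prodW Γ t := by
  simp [prodW]

lemma of_comm {v u : V} (hadj : Γ.Adj v u) (a : G v) (b : G u) :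
    GraphProduct.of Γ G v a * GraphProduct.of Γ G u b =
      GraphProduct.of Γ G u b * GraphProduct.of Γ G v a := by
  have hmem : (Monoid.CoprodI.of a * Monoid.CoprodI.of b *
      (Monoid.CoprodI.of a)⁻¹ * (Monoid.CoprodI.of b)⁻¹) ∈ graphProductRels Γ G :=
    Subgroup.subset_normalClosure ⟨v, u, a, b, hadj, rfl⟩
  have h2 : GraphProduct.of Γ G v a * GraphProduct.of Γ G u b *
      (GraphProduct.of Γ G v a)⁻¹ * (GraphProduct.of Γ G u b)⁻¹ = 1 := by
    have := (QuotientGroup.eq_one_iff _).2 hmem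
    exact this
  rw [mul_inv_eq_one] at h2
  rw [mul_inv_eq_iff_eq_mul] at h2
  exact h2

lemma sh_prodW {w w' : List (Σ v, G v)} (h : Sh Γ w w') :
    prodW Γ w = prodW Γ w' := by
  induction h with
  | refl => rfl
  | tail _ hstep ih =>
    refine ih.trans ?_
    obtain ⟨l₁, l₂, p, q, hadj, rfl, rfl⟩ := hstep
    rw [prodW_append, prodW_append, prodW_cons, prodW_cons, prodW_cons, prodW_cons]
    congr 1
    rw [← mul_assoc, ← mul_assoc, of_comm hadj]

lemma mulW_nt {v : V} {g : G v} {w : List (Σ v, G v)} (h : NT w) :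
    NT (mulW Γ v g w) := by
  by_cases hf : Frontable Γ v w
  · obtain ⟨l₁, b, l₂, rfl, hadj⟩ := hf
    rw [mulW_of_decomp rfl hadj]
    by_cases hgb : g * b = 1
    · rw [if_pos hgb]
      intro p hp
      exact h p (by simp only [List.mem_append] at hp ⊢; tauto)
    · rw [if_neg hgb]
      intro p hp
      simp only [List.mem_append, List.mem_cons] at hp
      rcases hp with hp | rfl | hp
      · exact h p (by simp [hp])
      · exact hgb
      · exact h p (by simp [hp])
  · rw [mulW_of_not_frontable hf]
    by_cases hg : g = 1
    · rwa [if_pos hg]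
    · rw [if_neg hg]
      intro p hp
      rcases List.mem_cons.1 hp with rfl | hp
      · exact hg
      · exact h p hp

lemma mulW_resp {v : V} (g : G v) {w w' : List (Σ v, G v)} (hsh : Sh Γ w w') :
    Sh Γ (mulW Γ v g w) (mulW Γ v g w') := by
  by_cases hf : Frontable Γ v w
  · obtain ⟨l₁, b, l₂, rfl, hadj⟩ := hf
    have h1 : Sh Γ w' (⟨v, b⟩ :: (l₁ ++ l₂)) :=
      (sh_symm hsh).trans (front_shuffle _ _ hadj)
    obtain ⟨m₁, m₂, rfl, hadj', hrest⟩ := decomp_of_sh h1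
    rw [mulW_of_decomp rfl hadj, mulW_of_decomp rfl hadj']
    by_cases hgb : g * b = 1
    · rw [if_pos hgb, if_pos hgb]
      exact sh_symm hrest
    · rw [if_neg hgb, if_neg hgb]
      exact ((front_shuffle _ _ hadj).trans (sh_cons _ (sh_symm hrest))).trans
        (sh_symm (front_shuffle _ _ hadj'))
  · have hf' : ¬ Frontable Γ v w' := fun h => hf (frontable_of_sh (sh_symm hsh) h)
    rw [mulW_of_not_frontable hf, mulW_of_not_frontable hf']
    by_cases hg : g = 1
    · rw [if_pos hg, if_pos hg]; exact hsh
    · rw [if_neg hg, if_neg hg]; exact sh_cons _ hsh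

lemma mulW_reduced {v : V} {g : G v} {w : List (Σ v, G v)} (h : Reduced Γ w) :
    Reduced Γ (mulW Γ v g w) := by
  refine ⟨mulW_nt h.1, ?_⟩
  by_cases hf : Frontable Γ v w
  · obtain ⟨l₁, b, l₂, rfl, hadj⟩ := hf
    rw [mulW_of_decomp rfl hadj]
    by_cases hgb : g * b = 1
    · rw [if_pos hgb]
      intro hb
      exact h.2 (bad_of_sh (front_shuffle _ _ hadj) (bad_cons hb))
    · rw [if_neg hgb]
      intro hb
      exact h.2 (bad_transport (by simp) hb)
  · rw [mulW_of_not_frontable hf]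
    by_cases hg : g = 1
    · rw [if_pos hg]; exact h.2
    · rw [if_neg hg]
      rintro ⟨z, hsh, l₁, p, q, l₂, rfl, hpq⟩
      obtain ⟨z₁, z₂, he, hadjz, hrest⟩ := decomp_of_sh (sh_symm hsh)
      rcases cons_overlap he with ⟨h1, h2, h3⟩ | ⟨t, h1, h2⟩ | ⟨t, h1, h2⟩
      · -- l₁ = z₁, p = ⟨v,g⟩, q :: l₂ = z₂
        obtain ⟨qv, qg⟩ := q
        have hqv : qv = v := by rw [h2] at hpq; exact hpq.symm
        subst hqv
        refine hf (frontable_of_sh hrest ⟨z₁, qg, l₂, by rw [← h3], ?_⟩)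
        intro q hq
        exact hadjz q hq
      · -- z₁ = l₁ ++ p :: t, q :: l₂ = t ++ ⟨v,g⟩ :: z₂
        cases t with
        | nil =>
          have hq : q = ⟨v, g⟩ := by injection h2
          have hpv : Γ.Adj p.1 v := hadjz p (by rw [h1]; simp)
          rw [hpq, hq] at hpv
          exact Γ.loopless.irrefl v hpv
        | cons y t' =>
          have hq : q = y := by injection h2
          have hl₂ : l₂ = t' ++ ⟨v, g⟩ :: z₂ := by injection h2
          refine h.2 ⟨z₁ ++ z₂, sh_symm hrest, l₁, p, q, t' ++ z₂, ?_, hpq⟩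
          rw [h1, hq]
          simp
      · -- l₁ = z₁ ++ ⟨v,g⟩ :: t, z₂ = t ++ p :: q :: l₂
        refine h.2 ⟨z₁ ++ z₂, sh_symm hrest, z₁ ++ t, p, q, l₂, ?_, hpq⟩
        rw [h2]
        simp

lemma mulW_one {v : V} {w : List (Σ v, G v)} (h : NT w) : mulW Γ v 1 w = w := by
  by_cases hf : Frontable Γ v w
  · obtain ⟨l₁, b, l₂, rfl, hadj⟩ := hf
    rw [mulW_of_decomp rfl hadj, if_neg (by rw [one_mul]; exact h ⟨v, b⟩ (by simp)),
      one_mul]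
  · rw [mulW_of_not_frontable hf, if_pos rfl]

lemma mulW_mul {v : V} {w : List (Σ v, G v)} (h : Reduced Γ w) (g g' : G v) :
    Sh Γ (mulW Γ v (g * g') w) (mulW Γ v g (mulW Γ v g' w)) := by
  by_cases hf : Frontable Γ v w
  · obtain ⟨l₁, b, l₂, rfl, hadj⟩ := hf
    rw [mulW_of_decomp rfl hadj, mulW_of_decomp rfl hadj]
    by_cases h1 : g' * b = 1
    · rw [if_pos h1]
      have hnf : ¬ Frontable Γ v (l₁ ++ l₂) := by
        rintro ⟨m₁, c, m₂, he, hadj'⟩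
        rcases List.append_eq_append_iff.1 he with ⟨s, rfl, hs⟩ | ⟨s, hl₁, hd⟩
        · subst hs
          refine h.2 ⟨⟨v, b⟩ :: ⟨v, c⟩ :: (l₁ ++ s ++ m₂), ?_, [], ⟨v, b⟩, ⟨v, c⟩,
            l₁ ++ s ++ m₂, rfl, rfl⟩
          have hs1 : Sh Γ (l₁ ++ ⟨v, b⟩ :: (s ++ ⟨v, c⟩ :: m₂))
              (⟨v, b⟩ :: (l₁ ++ (s ++ ⟨v, c⟩ :: m₂))) := front_shuffle _ _ hadj
          refine hs1.trans (sh_cons _ ?_)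
          have hpre : ∀ q ∈ l₁ ++ s, Γ.Adj q.1 v := by
            intro q hq
            rcases List.mem_append.1 hq with hq | hq
            · exact hadj q hq
            · exact hadj' q (by simp [hq])
          have := front_shuffle (Γ := Γ) (⟨v, c⟩ : Σ v, G v) m₂ hpre
          simpa using this
        · cases s with
          | nil =>
            have h2' : l₂ = ⟨v, c⟩ :: m₂ := by simpa using hd.symm
            exact h.2 ⟨l₁ ++ ⟨v, b⟩ :: l₂, Relation.ReflTransGen.refl, l₁, ⟨v, b⟩,
              ⟨v, c⟩, m₂, by rw [h2'], rfl⟩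
          | cons y s' =>
            have hy : (⟨v, c⟩ : Σ v, G v) = y := by injection hd
            exact absurd (hadj y (by rw [hl₁]; simp)) (by rw [← hy]; exact Γ.loopless.irrefl v)
      rw [mulW_of_not_frontable hnf]
      have hb : b = g'⁻¹ := eq_inv_of_mul_eq_one_right h1
      have h2 : g * g' * b = g := by rw [hb, mul_assoc, mul_inv_cancel, mul_one]
      rw [h2]
      by_cases hg : g = 1
      · rw [if_pos hg, if_pos hg]
      · rw [if_neg hg, if_neg hg]
        exact front_shuffle _ _ hadj
    · rw [if_neg h1, mulW_of_decomp rfl hadj, ← mul_assoc]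
  · by_cases hg' : g' = 1
    · rw [hg', mul_one, mulW_one h.1]
    · rw [mulW_of_not_frontable hf g', if_neg hg',
        mulW_of_decomp ((List.nil_append (⟨v, g'⟩ :: w)).symm) (by simp) g,
        mulW_of_not_frontable hf (g * g')]
      simp only [List.nil_append]
      exact Relation.ReflTransGen.refl

lemma mulW_cons_front {v : V} {x : Σ v, G v} (hx : Γ.Adj x.1 v)
    {w : List (Σ v, G v)} (hf : Frontable Γ v w) (g : G v) :
    mulW Γ v g (x :: w) = x :: mulW Γ v g w := by
  obtain ⟨l₁, b, l₂, rfl, hadjl⟩ := hf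
  have he : x :: (l₁ ++ ⟨v, b⟩ :: l₂) = (x :: l₁) ++ ⟨v, b⟩ :: l₂ := rfl
  have hadj2 : ∀ q ∈ x :: l₁, Γ.Adj q.1 v := by
    intro q hq
    rcases List.mem_cons.1 hq with rfl | hq
    · exact hx
    · exact hadjl q hq
  rw [mulW_of_decomp rfl hadjl, mulW_of_decomp he hadj2 g]
  by_cases hgb : g * b = 1
  · rw [if_pos hgb, if_pos hgb]; rfl
  · rw [if_neg hgb, if_neg hgb]; rfl

lemma frontable_cons_down {v : V} {x : Σ v, G v} {w : List (Σ v, G v)}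
    (h : Frontable Γ v (x :: w)) (hxv : x.1 ≠ v) : Frontable Γ v w := by
  obtain ⟨m₁, c, m₂, he, hadj'⟩ := h
  cases m₁ with
  | nil =>
    have hxc : x = ⟨v, c⟩ := by injection he
    exact absurd (congrArg Sigma.fst hxc) hxv
  | cons y m =>
    have h1 : w = m ++ ⟨v, c⟩ :: m₂ := by injection he
    exact ⟨m, c, m₂, h1, fun q hq => hadj' q (List.mem_cons_of_mem _ hq)⟩

lemma not_frontable_cons {v : V} {x : Σ v, G v} {w : List (Σ v, G v)}
    (hxv : x.1 ≠ v) (h : ¬ Frontable Γ v w) : ¬ Frontable Γ v (x :: w) :=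
  fun hf => h (frontable_cons_down hf hxv)

lemma not_frontable_mulW_other {v v' : V} (hadj : Γ.Adj v v') (g : G v)
    {w : List (Σ v, G v)} (hnf : ¬ Frontable Γ v' w) :
    ¬ Frontable Γ v' (mulW Γ v g w) := by
  by_cases hf : Frontable Γ v w
  · obtain ⟨l₁, b, l₂, rfl, hadjl⟩ := hf
    rw [mulW_of_decomp rfl hadjl]
    by_cases hgb : g * b = 1
    · rw [if_pos hgb]
      intro hfr
      exact hnf (frontable_insert (x := ⟨v, b⟩) hadj hfr)
    · rw [if_neg hgb]
      intro hfr
      exact hnf (frontable_transport (by simp) hfr)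
  · rw [mulW_of_not_frontable hf]
    by_cases hg : g = 1
    · rw [if_pos hg]; exact hnf
    · rw [if_neg hg]
      exact not_frontable_cons (by exact hadj.ne) hnf

lemma mulW_comm_some_none {v v' : V} (hadj : Γ.Adj v v') (g : G v) (g' : G v')
    {w : List (Σ v, G v)} (hf : Frontable Γ v w) (hnf : ¬ Frontable Γ v' w) :
    mulW Γ v g (mulW Γ v' g' w) = mulW Γ v' g' (mulW Γ v g w) := by
  have hnf2 : ¬ Frontable Γ v' (mulW Γ v g w) := not_frontable_mulW_other hadj g hnf
  rw [mulW_of_not_frontable hnf g', mulW_of_not_frontable hnf2 g']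
  by_cases hg' : g' = 1
  · rw [if_pos hg', if_pos hg']
  · rw [if_neg hg', if_neg hg']
    exact mulW_cons_front (by exact hadj.symm) hf g

lemma mulW_comm_some_some {v v' : V} (hadj : Γ.Adj v v') (g : G v) (g' : G v')
    {m₁ t l₂ : List (Σ v, G v)} {a : G v} {a' : G v'}
    (h1 : ∀ q ∈ m₁, Γ.Adj q.1 v)
    (h2 : ∀ q ∈ m₁ ++ ⟨v, a⟩ :: t, Γ.Adj q.1 v') :
    mulW Γ v g (mulW Γ v' g' (m₁ ++ ⟨v, a⟩ :: (t ++ ⟨v', a'⟩ :: l₂))) =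
      mulW Γ v' g' (mulW Γ v g (m₁ ++ ⟨v, a⟩ :: (t ++ ⟨v', a'⟩ :: l₂))) := by
  have hm₁v' : ∀ q ∈ m₁, Γ.Adj q.1 v' := fun q hq => h2 q (by simp [hq])
  have htv' : ∀ q ∈ t, Γ.Adj q.1 v' := fun q hq => h2 q (by simp [hq])
  have e1 : m₁ ++ ⟨v, a⟩ :: (t ++ ⟨v', a'⟩ :: l₂) =
      (m₁ ++ ⟨v, a⟩ :: t) ++ ⟨v', a'⟩ :: l₂ := by simp
  rw [mulW_of_decomp rfl h1 g, mulW_of_decomp e1 h2 g']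
  by_cases hga : g * a = 1 <;> by_cases hga' : g' * a' = 1
  · rw [if_pos hga, if_pos hga']
    rw [mulW_of_decomp (show (m₁ ++ ⟨v, a⟩ :: t) ++ l₂ = m₁ ++ ⟨v, a⟩ :: (t ++ l₂)
      by simp) h1 g, if_pos hga]
    rw [mulW_of_decomp (show m₁ ++ (t ++ ⟨v', a'⟩ :: l₂) = (m₁ ++ t) ++ ⟨v', a'⟩ :: l₂
      by simp) (by
        intro q hq
        rcases List.mem_append.1 hq with hq | hq
        · exact hm₁v' q hq
        · exact htv' q hq) g', if_pos hga']
    simp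
  · rw [if_pos hga, if_neg hga']
    rw [mulW_of_decomp (show (m₁ ++ ⟨v, a⟩ :: t) ++ ⟨v', g' * a'⟩ :: l₂ =
      m₁ ++ ⟨v, a⟩ :: (t ++ ⟨v', g' * a'⟩ :: l₂) by simp) h1 g, if_pos hga]
    rw [mulW_of_decomp (show m₁ ++ (t ++ ⟨v', a'⟩ :: l₂) = (m₁ ++ t) ++ ⟨v', a'⟩ :: l₂
      by simp) (by
        intro q hq
        rcases List.mem_append.1 hq with hq | hq
        · exact hm₁v' q hq
        · exact htv' q hq) g', if_neg hga']
    simp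
  · rw [if_neg hga, if_pos hga']
    rw [mulW_of_decomp (show (m₁ ++ ⟨v, a⟩ :: t) ++ l₂ = m₁ ++ ⟨v, a⟩ :: (t ++ l₂)
      by simp) h1 g, if_neg hga]
    rw [mulW_of_decomp (show m₁ ++ ⟨v, g * a⟩ :: (t ++ ⟨v', a'⟩ :: l₂) =
      (m₁ ++ ⟨v, g * a⟩ :: t) ++ ⟨v', a'⟩ :: l₂ by simp) (by
        intro q hq
        simp only [List.mem_append, List.mem_cons] at hq
        rcases hq with hq | rfl | hq
        · exact hm₁v' q hq
        · exact hadj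
        · exact htv' q hq) g', if_pos hga']
    simp
  · rw [if_neg hga, if_neg hga']
    rw [mulW_of_decomp (show (m₁ ++ ⟨v, a⟩ :: t) ++ ⟨v', g' * a'⟩ :: l₂ =
      m₁ ++ ⟨v, a⟩ :: (t ++ ⟨v', g' * a'⟩ :: l₂) by simp) h1 g, if_neg hga]
    rw [mulW_of_decomp (show m₁ ++ ⟨v, g * a⟩ :: (t ++ ⟨v', a'⟩ :: l₂) =
      (m₁ ++ ⟨v, g * a⟩ :: t) ++ ⟨v', a'⟩ :: l₂ by simp) (by
        intro q hq
        simp only [List.mem_append, List.mem_cons] at hq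
        rcases hq with hq | rfl | hq
        · exact hm₁v' q hq
        · exact hadj
        · exact htv' q hq) g', if_neg hga']
    simp

lemma mulW_comm_none_none {v v' : V} (hadj : Γ.Adj v v') (g : G v) (g' : G v')
    {w : List (Σ v, G v)} (hfv : ¬ Frontable Γ v w) (hfv' : ¬ Frontable Γ v' w) :
    Sh Γ (mulW Γ v g (mulW Γ v' g' w)) (mulW Γ v' g' (mulW Γ v g w)) := by
  rw [mulW_of_not_frontable hfv' g', mulW_of_not_frontable hfv g]
  by_cases hg : g = 1 <;> by_cases hg' : g' = 1
  · rw [if_pos hg, if_pos hg', mulW_of_not_frontable hfv g,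
      mulW_of_not_frontable hfv' g', if_pos hg, if_pos hg']
  · rw [if_pos hg, if_neg hg',
      mulW_of_not_frontable (not_frontable_cons (by exact hadj.symm.ne) hfv) g,
      mulW_of_not_frontable hfv' g', if_pos hg, if_neg hg']
  · rw [if_neg hg, if_pos hg', mulW_of_not_frontable hfv g,
      mulW_of_not_frontable (not_frontable_cons (by exact hadj.ne) hfv') g',
      if_neg hg, if_pos hg']
  · rw [if_neg hg, if_neg hg',
      mulW_of_not_frontable (not_frontable_cons (by exact hadj.symm.ne) hfv) g,
      mulW_of_not_frontable (not_frontable_cons (by exact hadj.ne) hfv') g',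
      if_neg hg, if_neg hg']
    exact Relation.ReflTransGen.single ⟨[], w, ⟨v, g⟩, ⟨v', g'⟩, hadj, rfl, rfl⟩

lemma mulW_comm {v v' : V} (hadj : Γ.Adj v v') (g : G v) (g' : G v')
    (w : List (Σ v, G v)) :
    Sh Γ (mulW Γ v g (mulW Γ v' g' w)) (mulW Γ v' g' (mulW Γ v g w)) := by
  by_cases hfv : Frontable Γ v w <;> by_cases hfv' : Frontable Γ v' w
  · obtain ⟨m₁, a, m₂, he, h1⟩ := hfv
    obtain ⟨n₁, a', n₂, he', h2⟩ := hfv'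
    rcases cons_overlap (he.symm.trans he') with ⟨h3, h4, h5⟩ | ⟨t, h3, h4⟩ | ⟨t, h3, h4⟩
    · exact absurd (congrArg Sigma.fst h4) hadj.ne
    · rw [he, h4]
      rw [mulW_comm_some_some hadj g g' h1 (by rw [← h3]; exact h2)]
    · rw [he', h4]
      rw [mulW_comm_some_some hadj.symm g' g h2 (by rw [← h3]; exact h1)]
  · rw [mulW_comm_some_none hadj g g' hfv hfv']
  · rw [mulW_comm_some_none hadj.symm g' g hfv' hfv]
  · exact mulW_comm_none_none hadj g g' hfv hfv'

/-- Reduced words. -/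
def RW (Γ : SimpleGraph V) (G : V → Type) [∀ v, Group (G v)] : Type :=
  {w : List (Σ v, G v) // Reduced Γ w}

instance rwSetoid (Γ : SimpleGraph V) (G : V → Type) [∀ v, Group (G v)] :
    Setoid (RW Γ G) :=
  ⟨fun w w' => Sh Γ w.1 w'.1,
    ⟨fun _ => Relation.ReflTransGen.refl, fun h => sh_symm h,
      fun h h' => Relation.ReflTransGen.trans h h'⟩⟩

/-- Shuffle classes of reduced words. -/
def XCl (Γ : SimpleGraph V) (G : V → Type) [∀ v, Group (G v)] : Type :=
  Quotient (rwSetoid Γ G)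

/-- Action of a vertex-group element on shuffle classes of reduced words. -/
noncomputable def act (Γ : SimpleGraph V) {v : V} (g : G v) :
    XCl Γ G → XCl Γ G :=
  Quotient.map' (fun w => ⟨mulW Γ v g w.1, mulW_reduced w.2⟩)
    (fun _ _ hab => mulW_resp g hab)

lemma act_mk (v : V) (g : G v) (w : RW Γ G) :
    act Γ g (Quotient.mk'' w) =
      Quotient.mk'' ⟨mulW Γ v g w.1, mulW_reduced w.2⟩ := rfl

lemma act_one (v : V) : act Γ (1 : G v) = id := by
  funext x
  refine Quotient.inductionOn' x (fun w => ?_)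
  rw [act_mk]
  exact Quotient.sound' (show Sh Γ (mulW Γ v 1 w.1) w.1 by
    rw [mulW_one w.2.1])

lemma act_mul (v : V) (g g' : G v) :
    act Γ (g * g') = act Γ g ∘ act Γ g' := by
  funext x
  refine Quotient.inductionOn' x (fun w => ?_)
  show act Γ (g * g') (Quotient.mk'' w) = act Γ g (act Γ g' (Quotient.mk'' w))
  erw [act_mk, act_mk]
  exact Quotient.sound' (mulW_mul w.2 g g')

/-- The homomorphism from a vertex group to maps on shuffle classes. -/
noncomputable def phi (Γ : SimpleGraph V) (v : V) :
    G v →* Function.End (XCl Γ G) where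
  toFun g := act Γ g
  map_one' := act_one v
  map_mul' g g' := act_mul v g g'

lemma phi_comm {v v' : V} (hadj : Γ.Adj v v') (g : G v) (g' : G v') :
    phi Γ v g * phi Γ v' g' = phi Γ v' g' * phi Γ v g := by
  funext x
  refine Quotient.inductionOn' x (fun w => ?_)
  show act Γ g (act Γ g' (Quotient.mk'' w)) = act Γ g' (act Γ g (Quotient.mk'' w))
  erw [act_mk, act_mk]
  exact Quotient.sound' (mulW_comm hadj g g' w.1)

variable (G)

/-- The homomorphism from the free product. -/
noncomputable def Phi (Γ : SimpleGraph V) : Monoid.CoprodI G →* Function.End (XCl Γ G) :=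
  Monoid.CoprodI.lift (fun v => phi Γ v)

variable {G}

lemma ker_normal : ((Phi G Γ).ker).Normal := by
  constructor
  intro n hn g
  rw [MonoidHom.mem_ker] at hn ⊢
  rw [map_mul, map_mul, hn, mul_one, ← map_mul, mul_inv_cancel, map_one]

lemma rels_le_ker : graphProductRels Γ G ≤ (Phi G Γ).ker := by
  haveI := ker_normal (Γ := Γ) (G := G)
  apply Subgroup.normalClosure_le_normal
  rintro x ⟨v, u, gv, gu, hadj, rfl⟩
  rw [SetLike.mem_coe, MonoidHom.mem_ker]
  rw [← map_inv, ← map_inv, map_mul, map_mul, map_mul]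
  have hof : ∀ (x : V) (gx : G x), Phi G Γ (Monoid.CoprodI.of gx) = phi Γ x gx :=
    fun x gx => Monoid.CoprodI.lift_of _ _
  rw [hof v gv, hof u gu, hof v gv⁻¹, hof u gu⁻¹]
  rw [mul_assoc (phi Γ v gv), phi_comm hadj.symm gu gv⁻¹, ← mul_assoc]
  rw [← map_mul, mul_inv_cancel, map_one, one_mul, ← map_mul, mul_inv_cancel, map_one]

/-- The homomorphism from the graph product. -/
noncomputable def Psi (Γ : SimpleGraph V) : GraphProduct Γ G →* Function.End (XCl Γ G) :=
  QuotientGroup.lift _ (Phi G Γ) rels_le_ker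

lemma psi_of (v : V) (g : G v) :
    Psi Γ (GraphProduct.of Γ G v g) = phi Γ v g := by
  show Psi Γ (QuotientGroup.mk' (graphProductRels Γ G) (Monoid.CoprodI.of g)) = _
  have h1 := QuotientGroup.lift_mk' (graphProductRels Γ G)
    (rels_le_ker (Γ := Γ)) (Monoid.CoprodI.of g)
  exact h1.trans (Monoid.CoprodI.lift_of _ _)

/-- The class of the empty word. -/
noncomputable def emptyX (Γ : SimpleGraph V) (G : V → Type) [∀ v, Group (G v)] :
    XCl Γ G :=
  Quotient.mk'' ⟨[], reduced_nil⟩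

lemma eval (w : List (Σ v, G v)) : ∀ (h : Reduced Γ w),
    Psi Γ (prodW Γ w) (emptyX Γ G) = Quotient.mk'' ⟨w, h⟩ := by
  induction w with
  | nil =>
    intro h
    show Psi Γ 1 (emptyX Γ G) = _
    rw [map_one]
    rfl
  | cons p t ih =>
    intro h
    have ht : Reduced Γ t := reduced_tail h
    rw [prodW_cons, map_mul]
    show Psi Γ (GraphProduct.of Γ G p.1 p.2) (Psi Γ (prodW Γ t) (emptyX Γ G)) = _
    rw [ih ht, psi_of]
    show act Γ p.2 (Quotient.mk'' ⟨t, ht⟩) = _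
    erw [act_mk]
    apply Quotient.sound'
    show Sh Γ (mulW Γ p.1 p.2 t) (p :: t)
    have hnf : ¬ Frontable Γ p.1 t := by
      rintro ⟨l₁, b, l₂, rfl, hadjl⟩
      exact h.2 ⟨p :: ⟨p.1, b⟩ :: (l₁ ++ l₂), sh_cons p (front_shuffle _ _ hadjl),
        [], p, ⟨p.1, b⟩, l₁ ++ l₂, rfl, rfl⟩
    rw [mulW_of_not_frontable hnf, if_neg (h.1 p (by simp))]

/-- Minimal expressions are reduced. -/
lemma reduced_of_minimal {g : GraphProduct Γ G} {m : List (Σ v, G v)}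
    (hm : IsExpr Γ G g m) (hmin : ∀ m', IsExpr Γ G g m' → m.length ≤ m'.length) :
    Reduced Γ m := by
  refine ⟨hm.1, ?_⟩
  rintro ⟨z, hsh, l₁, p, q, l₂, rfl, hpq⟩
  obtain ⟨u, a⟩ := p
  obtain ⟨u', b⟩ := q
  have hu : u = u' := hpq
  subst hu
  have hzNT : NT (l₁ ++ ⟨u, a⟩ :: ⟨u, b⟩ :: l₂) := nt_of_sh hsh hm.1
  have hprod : prodW Γ (l₁ ++ ⟨u, a⟩ :: ⟨u, b⟩ :: l₂) = g := by
    rw [← sh_prodW hsh]; exact hm.2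
  have hlen : m.length = l₁.length + l₂.length + 2 := by
    have := sh_length hsh
    simp at this
    omega
  by_cases hab : a * b = 1
  · have hexpr : IsExpr Γ G g (l₁ ++ l₂) := by
      constructor
      · intro x hx
        refine hzNT x ?_
        simp only [List.mem_append, List.mem_cons] at hx ⊢
        tauto
      · have hxy : GraphProduct.of Γ G u a * GraphProduct.of Γ G u b = 1 := by
          rw [← map_mul, hab, map_one]
        have e : prodW Γ (l₁ ++ l₂) = prodW Γ (l₁ ++ ⟨u, a⟩ :: ⟨u, b⟩ :: l₂) := by
          simp only [prodW_append, prodW_cons]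
          conv_rhs => rw [← mul_assoc (GraphProduct.of Γ G u a), hxy, one_mul]
        exact e.trans hprod
    have := hmin _ hexpr
    simp only [List.length_append] at this
    omega
  · have hexpr : IsExpr Γ G g (l₁ ++ ⟨u, a * b⟩ :: l₂) := by
      constructor
      · intro x hx
        simp only [List.mem_append, List.mem_cons] at hx
        rcases hx with hx | rfl | hx
        · exact hzNT x (by simp [hx])
        · exact hab
        · exact hzNT x (by simp [hx])
      · have e : prodW Γ (l₁ ++ ⟨u, a * b⟩ :: l₂) =
            prodW Γ (l₁ ++ ⟨u, a⟩ :: ⟨u, b⟩ :: l₂) := by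
          simp only [prodW_append, prodW_cons]
          rw [map_mul, mul_assoc]
        exact e.trans hprod
    have := hmin _ hexpr
    simp only [List.length_append, List.length_cons] at this
    omega

/-- Two minimal expressions of the same element are shuffle equivalent. -/
lemma minimal_unique {g : GraphProduct Γ G} {l l' : List (Σ v, G v)}
    (hl : IsExpr Γ G g l) (hl' : IsExpr Γ G g l')
    (hmin : ∀ m, IsExpr Γ G g m → l.length ≤ m.length)
    (hmin' : ∀ m, IsExpr Γ G g m → l'.length ≤ m.length) :
    Sh Γ l l' := by
  have hr := reduced_of_minimal hl hmin
  have hr' := reduced_of_minimal hl' hmin'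
  have h1 := eval l hr
  have h2 := eval l' hr'
  have hpl : prodW Γ l = g := hl.2
  have hpl' : prodW Γ l' = g := hl'.2
  rw [hpl] at h1
  rw [hpl'] at h2
  exact Quotient.exact' (h1.symm.trans h2)

end GreenAux

/-- Any two minimal-length expressions of a nontrivial element of a graph
product have the same length, and are related by a sequence of swaps of
adjacent syllables from commuting vertex groups. -/
theorem graphProduct_syllable_length_well_defined {V : Type} [Fintype V]
    (Γ : SimpleGraph V) (G : V → Type) [∀ v, Group (G v)]
    (g : GraphProduct Γ G) (hg : g ≠ 1) (l l' : List (Σ v, G v))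
    (hl : IsExpr Γ G g l) (hl' : IsExpr Γ G g l')
    (hmin : ∀ m, IsExpr Γ G g m → l.length ≤ m.length)
    (hmin' : ∀ m, IsExpr Γ G g m → l'.length ≤ m.length) :
    l.length = l'.length ∧ Relation.ReflTransGen (SwapStep Γ G) l l' :=
  ⟨le_antisymm (hmin l' hl') (hmin' l hl),
    GreenAux.minimal_unique hl hl' hmin hmin'⟩
end

section
/- If G is an extension of a sofic group by an amenable group (i.e., G has a normal subgroup N with N sofic and G/N amenable), then G is sofic. -/
/-- Two permutations `f, g` of `A` are `ε`-similar if the number of points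
where they differ is at most `ε·|A|`. -/
def SimilarLE {A : Type*} (ε : ℝ) (f g : Equiv.Perm A) : Prop :=
  (Nat.card {a : A // f a ≠ g a} : ℝ) ≤ ε * Nat.card A

/-- A special `(F,ε)`-quasi-action of a group `G` on `A`. -/
structure IsSpecialQuasiAction {G A : Type*} [Group G] (F : Set G) (ε : ℝ)
    (φ : G → Equiv.Perm A) : Prop where
  map_one : φ 1 = 1
  map_inv : ∀ g : G, φ g⁻¹ = (φ g)⁻¹
  fixed_point_free : ∀ g ∈ F, g ≠ 1 → ∀ a : A, φ g a ≠ a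
  approx_mul : ∀ g₁ ∈ F, ∀ g₂ ∈ F, SimilarLE ε (φ (g₁ * g₂)) (φ g₁ * φ g₂)

/-- A group is sofic if for every `ε ∈ (0,1)` and finite `F ⊆ G` there is a
special `(F,ε)`-quasi-action on a finite nonempty set. -/
def IsSofic (G : Type*) [Group G] : Prop :=
  ∀ ε : ℝ, 0 < ε → ε < 1 → ∀ F : Finset G,
    ∃ (A : Type) (_ : Finite A) (_ : Nonempty A) (φ : G → Equiv.Perm A),
      IsSpecialQuasiAction (F : Set G) ε φ

/-- A group is amenable if it satisfies the Følner condition: for every finite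
subset `S` and every `ε > 0` there is a nonempty finite Følner set `F` that is
`ε`-almost invariant under left translation by each element of `S`. -/
def IsAmenable (G : Type*) [Group G] : Prop :=
  ∀ (S : Finset G) (ε : ℝ), 0 < ε → ∃ F : Finset G, F.Nonempty ∧
    ∀ g ∈ S, (Nat.card ↥((g * ·) '' (F : Set G) \ (F : Set G)) : ℝ) ≤ ε * F.card

set_option linter.unusedSectionVars false
set_option linter.unnecessarySimpa false


namespace SoficExtensionProof

variable {G : Type*} [Group G] {N : Subgroup G} [N.Normal]

noncomputable def coc (g : G) (q : G ⧸ N) : N :=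
  ⟨(Quotient.out ((g : G ⧸ N) * q))⁻¹ * g * Quotient.out q, by
    rw [← QuotientGroup.eq_one_iff]
    simp only [QuotientGroup.mk_mul, QuotientGroup.mk_inv, QuotientGroup.out_eq']
    group⟩

lemma coc_coe (g : G) (q : G ⧸ N) :
    (coc g q : G) = (Quotient.out ((g : G ⧸ N) * q))⁻¹ * g * Quotient.out q := rfl

lemma coc_one (q : G ⧸ N) : coc (N := N) 1 q = 1 := by
  apply Subtype.ext
  simp [coc_coe]

lemma coc_mul (g₁ g₂ : G) (q : G ⧸ N) :
    coc (g₁ * g₂) q = coc g₁ ((g₂ : G ⧸ N) * q) * coc g₂ q := by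
  apply Subtype.ext
  push_cast
  simp only [coc_coe]
  have h : ((g₁ * g₂ : G) : G ⧸ N) * q = (g₁ : G ⧸ N) * ((g₂ : G ⧸ N) * q) := by
    rw [QuotientGroup.mk_mul, mul_assoc]
  rw [h]
  group

lemma coc_inv (g : G) (q : G ⧸ N) : coc g⁻¹ ((g : G ⧸ N) * q) = (coc g q)⁻¹ := by
  have h := coc_mul g⁻¹ g q
  rw [inv_mul_cancel, coc_one] at h
  exact eq_inv_of_mul_eq_one_left h.symm

lemma coc_ne_one {g : G} {q : G ⧸ N} (hq : (g : G ⧸ N) * q = q) (hg : g ≠ 1) :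
    coc (N := N) g q ≠ 1 := by
  intro h
  apply hg
  have h' : (Quotient.out ((g : G ⧸ N) * q))⁻¹ * g * Quotient.out q = 1 := congrArg Subtype.val h
  rw [hq] at h'
  have hgq : g = Quotient.out q * ((Quotient.out q)⁻¹ * g * Quotient.out q) * (Quotient.out q)⁻¹ := by
    group
  rw [hgq, h']
  group

section Core

open scoped Classical

variable (E : Finset (G ⧸ N)) {B : Type*} [Finite B] (ψ : N → Equiv.Perm B)

/-- `x` is a good point for `g` if `g` moves its first coordinate inside `E`. -/
def Good (g : G) (x : {q // q ∈ E} × B) : Prop := (g : G ⧸ N) * (x.1 : G ⧸ N) ∈ E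

/-- The partially-defined pre-action on `E × B`. -/
noncomputable def Fm (g : G) (x : {q // q ∈ E} × B) : {q // q ∈ E} × B :=
  if h : Good E g x then (⟨(g : G ⧸ N) * (x.1 : G ⧸ N), h⟩, ψ (coc g x.1) x.2) else x

lemma Fm_apply {g : G} {x : {q // q ∈ E} × B} (h : Good E g x) :
    Fm E ψ g x = (⟨(g : G ⧸ N) * (x.1 : G ⧸ N), h⟩, ψ (coc g x.1) x.2) := dif_pos h

lemma good_one (x : {q // q ∈ E} × B) : Good E (1 : G) x := by
  simpa [Good] using x.1.2

lemma good_Fm {g : G} {x : {q // q ∈ E} × B} (h : Good E g x) :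
    Good E g⁻¹ (Fm E ψ g x) := by
  rw [Fm_apply E ψ h]
  simp only [Good, QuotientGroup.mk_inv]
  rw [inv_mul_cancel_left]
  exact x.1.2

lemma Fm_inv (hψ1 : ∀ m : N, ψ m⁻¹ = (ψ m)⁻¹) {g : G} {x : {q // q ∈ E} × B}
    (h : Good E g x) : Fm E ψ g⁻¹ (Fm E ψ g x) = x := by
  rw [Fm_apply E ψ h, Fm_apply E ψ (by simpa [Fm_apply E ψ h] using good_Fm E ψ h)]
  apply Prod.ext
  · apply Subtype.ext
    simp [QuotientGroup.mk_inv, inv_mul_cancel_left]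
  · show ψ (coc g⁻¹ ((g : G ⧸ N) * (x.1 : G ⧸ N))) (ψ (coc g x.1) x.2) = x.2
    rw [coc_inv, hψ1]
    exact Equiv.symm_apply_apply _ _

/-- Good points for `g` biject with good points for `g⁻¹`. -/
noncomputable def goodEquiv (hψ1 : ∀ m : N, ψ m⁻¹ = (ψ m)⁻¹) (g : G) :
    {x : {q // q ∈ E} × B // Good E g x} ≃ {x : {q // q ∈ E} × B // Good E g⁻¹ x} where
  toFun p := ⟨Fm E ψ g p, good_Fm E ψ p.2⟩
  invFun p := ⟨Fm E ψ g⁻¹ p, by have := good_Fm E ψ (g := g⁻¹) p.2; rwa [inv_inv] at this⟩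
  left_inv p := Subtype.ext (Fm_inv E ψ hψ1 p.2)
  right_inv p := Subtype.ext (by
    show Fm E ψ g (Fm E ψ g⁻¹ (p : {q // q ∈ E} × B)) = (p : {q // q ∈ E} × B)
    have := Fm_inv E ψ (g := g⁻¹) hψ1 p.2; rwa [inv_inv] at this)

lemma bad_card_eq (hψ1 : ∀ m : N, ψ m⁻¹ = (ψ m)⁻¹) (g : G) :
    Nat.card {x : {q // q ∈ E} × B // ¬ Good E g x}
      = Nat.card {x : {q // q ∈ E} × B // ¬ Good E g⁻¹ x} := by
  have h1 : Nat.card {x : {q // q ∈ E} × B // Good E g x}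
      = Nat.card {x : {q // q ∈ E} × B // Good E g⁻¹ x} :=
    Nat.card_congr (goodEquiv E ψ hψ1 g)
  have h2 := Set.ncard_add_ncard_compl {x : {q // q ∈ E} × B | Good E g x}
  have h3 := Set.ncard_add_ncard_compl {x : {q // q ∈ E} × B | Good E g⁻¹ x}
  rw [Set.compl_setOf] at h2 h3
  have e2 : Nat.card {x : {q // q ∈ E} × B // ¬ Good E g x}
      = ({x : {q // q ∈ E} × B | ¬ Good E g x}).ncard := Nat.card_coe_set_eq _
  have e2' : Nat.card {x : {q // q ∈ E} × B // ¬ Good E g⁻¹ x}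
      = ({x : {q // q ∈ E} × B | ¬ Good E g⁻¹ x}).ncard := Nat.card_coe_set_eq _
  have e1 : Nat.card {x : {q // q ∈ E} × B // Good E g x}
      = ({x : {q // q ∈ E} × B | Good E g x}).ncard := Nat.card_coe_set_eq _
  have e1' : Nat.card {x : {q // q ∈ E} × B // Good E g⁻¹ x}
      = ({x : {q // q ∈ E} × B | Good E g⁻¹ x}).ncard := Nat.card_coe_set_eq _
  omega

/-- A chosen bijection between the bad sets of `g` and of `g⁻¹`. -/
noncomputable def bchoice (hψ1 : ∀ m : N, ψ m⁻¹ = (ψ m)⁻¹) (g : G) :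
    {x : {q // q ∈ E} × B // ¬ Good E g x} ≃ {x : {q // q ∈ E} × B // ¬ Good E g⁻¹ x} :=
  Classical.choice (Finite.card_eq.mp (bad_card_eq E ψ hψ1 g))

end Core

/-- A choice of one element out of each pair `{g, g⁻¹}`. -/
noncomputable def pick (g : G) : G :=
  Set.Nonempty.some (s := ({g, g⁻¹} : Set G)) ⟨g, by simp⟩

lemma pick_mem (g : G) : pick g ∈ ({g, g⁻¹} : Set G) := Set.Nonempty.some_mem _

lemma pick_inv (g : G) : pick g⁻¹ = pick g := by
  have key : ∀ (s t : Set G) (h : s.Nonempty) (h' : t.Nonempty), s = t → h.some = h'.some := by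
    rintro s t h h' rfl; rfl
  exact key _ _ _ _ (by rw [inv_inv]; exact Set.pair_comm _ _)


section Core2

open scoped Classical

variable (E : Finset (G ⧸ N)) {B : Type*} [Finite B] (ψ : N → Equiv.Perm B)
  (hψ1 : ∀ m : N, ψ m⁻¹ = (ψ m)⁻¹)

/-- The extension map on bad points, compatible with inverses. -/
noncomputable def bmap (g : G) (x : {q // q ∈ E} × B) : {q // q ∈ E} × B :=
  if _hgg : g⁻¹ = g then x
  else if h : Good E g x then x
  else if _hp : pick g = g then (bchoice E ψ hψ1 g ⟨x, h⟩ : {x // ¬ Good E g⁻¹ x}).1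
  else ((bchoice E ψ hψ1 g⁻¹).symm ⟨x, by rw [inv_inv]; exact h⟩).1

lemma bmap_invol {g : G} (hgg : g⁻¹ = g) (x : {q // q ∈ E} × B) :
    bmap E ψ hψ1 g x = x := by
  unfold bmap; rw [dif_pos hgg]

lemma bmap_pick {g : G} (hgg : ¬ g⁻¹ = g) {x : {q // q ∈ E} × B} (h : ¬ Good E g x)
    (hp : pick g = g) :
    bmap E ψ hψ1 g x = (bchoice E ψ hψ1 g ⟨x, h⟩ : {x // ¬ Good E g⁻¹ x}).1 := by
  unfold bmap; rw [dif_neg hgg, dif_neg h, dif_pos hp]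

lemma bmap_unpick {g : G} (hgg : ¬ g⁻¹ = g) {x : {q // q ∈ E} × B} (h : ¬ Good E g x)
    (hp : ¬ pick g = g) :
    bmap E ψ hψ1 g x
      = ((bchoice E ψ hψ1 g⁻¹).symm ⟨x, by rw [inv_inv]; exact h⟩).1 := by
  unfold bmap; rw [dif_neg hgg, dif_neg h, dif_neg hp]

lemma bmap_not_good {g : G} {x : {q // q ∈ E} × B} (h : ¬ Good E g x) :
    ¬ Good E g⁻¹ (bmap E ψ hψ1 g x) := by
  by_cases hgg : g⁻¹ = g
  · rw [bmap_invol E ψ hψ1 hgg, hgg]; exact h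
  · by_cases hp : pick g = g
    · rw [bmap_pick E ψ hψ1 hgg h hp]
      exact (bchoice E ψ hψ1 g ⟨x, h⟩).2
    · rw [bmap_unpick E ψ hψ1 hgg h hp]
      exact ((bchoice E ψ hψ1 g⁻¹).symm ⟨x, by rw [inv_inv]; exact h⟩).2

lemma pick_cases (g : G) : pick g = g ∨ pick g = g⁻¹ := pick_mem g

lemma bchoice_symm_congr {k g : G} (hk : k = g) (y : {q // q ∈ E} × B)
    (hy : ¬ Good E k⁻¹ y) (hy' : ¬ Good E g⁻¹ y) :
    ((bchoice E ψ hψ1 k).symm ⟨y, hy⟩).1 = ((bchoice E ψ hψ1 g).symm ⟨y, hy'⟩).1 := by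
  subst hk; rfl

lemma bmap_inv {g : G} {x : {q // q ∈ E} × B} (h : ¬ Good E g x) :
    bmap E ψ hψ1 g⁻¹ (bmap E ψ hψ1 g x) = x := by
  by_cases hgg : g⁻¹ = g
  · have hgg' : g⁻¹⁻¹ = g⁻¹ := congrArg (·⁻¹) hgg
    rw [bmap_invol E ψ hψ1 hgg, bmap_invol E ψ hψ1 hgg']
  · have hgg' : ¬ g⁻¹⁻¹ = g⁻¹ := by
      intro hc; rw [inv_inv] at hc; exact hgg hc.symm
    by_cases hp : pick g = g
    · have hp' : ¬ pick g⁻¹ = g⁻¹ := by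
        rw [pick_inv, hp]; intro hc; exact hgg hc.symm
      rw [bmap_pick E ψ hψ1 hgg h hp]
      rw [bmap_unpick E ψ hψ1 hgg' (bchoice E ψ hψ1 g ⟨x, h⟩).2 hp']
      refine (bchoice_symm_congr E ψ hψ1 (inv_inv g) _ _
        ((bchoice E ψ hψ1 g ⟨x, h⟩).2)).trans ?_
      exact congrArg Subtype.val ((bchoice E ψ hψ1 g).symm_apply_apply ⟨x, h⟩)
    · have hp' : pick g⁻¹ = g⁻¹ := by
        have hd : pick g = g⁻¹ := (pick_cases g).resolve_left hp
        rw [pick_inv]; exact hd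
      rw [bmap_unpick E ψ hψ1 hgg h hp]
      rw [bmap_pick E ψ hψ1 hgg'
        ((bchoice E ψ hψ1 g⁻¹).symm ⟨x, by rw [inv_inv]; exact h⟩).2 hp']
      exact congrArg Subtype.val ((bchoice E ψ hψ1 g⁻¹).apply_symm_apply ⟨x, _⟩)

end Core2


section Core3

open scoped Classical

variable (E : Finset (G ⧸ N)) {B : Type*} [Finite B] (ψ : N → Equiv.Perm B)
  (hψ1 : ∀ m : N, ψ m⁻¹ = (ψ m)⁻¹)

/-- The underlying map of the quasi-action of `G` on `(E × B) × Bool`. -/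
noncomputable def T (g : G) (z : ({q // q ∈ E} × B) × Bool) : ({q // q ∈ E} × B) × Bool :=
  if _h : Good E g z.1 then (Fm E ψ g z.1, z.2)
  else if bmap E ψ hψ1 g z.1 = z.1 then (z.1, !z.2) else (bmap E ψ hψ1 g z.1, z.2)

lemma T_good {g : G} {z : ({q // q ∈ E} × B) × Bool} (h : Good E g z.1) :
    T E ψ hψ1 g z = (Fm E ψ g z.1, z.2) := dif_pos h

lemma T_T_inv (g : G) (z : ({q // q ∈ E} × B) × Bool) :
    T E ψ hψ1 g⁻¹ (T E ψ hψ1 g z) = z := by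
  by_cases h : Good E g z.1
  · rw [T_good E ψ hψ1 h, T_good E ψ hψ1 (good_Fm E ψ h), Fm_inv E ψ hψ1 h]
  · have hb := bmap_not_good E ψ hψ1 h
    have hbi := bmap_inv E ψ hψ1 h
    have hTz : T E ψ hψ1 g z
        = if bmap E ψ hψ1 g z.1 = z.1 then (z.1, !z.2) else (bmap E ψ hψ1 g z.1, z.2) := by
      rw [T, dif_neg h]
    by_cases he : bmap E ψ hψ1 g z.1 = z.1
    · rw [if_pos he] at hTz
      rw [he] at hb hbi
      rw [hTz, T]
      dsimp only
      rw [dif_neg hb, if_pos hbi]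
      simp
    · rw [if_neg he] at hTz
      rw [hTz, T]
      dsimp only
      have hne : ¬ (bmap E ψ hψ1 g⁻¹ (bmap E ψ hψ1 g z.1) = bmap E ψ hψ1 g z.1) := by
        rw [hbi]; exact fun hc => he hc.symm
      rw [dif_neg hb, if_neg hne, hbi]

/-- The quasi-action of `G` on `(E × B) × Bool`. -/
noncomputable def Phi (g : G) : Equiv.Perm (({q // q ∈ E} × B) × Bool) where
  toFun := T E ψ hψ1 g
  invFun := T E ψ hψ1 g⁻¹
  left_inv := T_T_inv E ψ hψ1 g
  right_inv := fun z => by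
    have := T_T_inv E ψ hψ1 g⁻¹ z
    rwa [inv_inv] at this

lemma Phi_apply (g : G) (z) : Phi E ψ hψ1 g z = T E ψ hψ1 g z := rfl

lemma Phi_one (hψone : ψ 1 = 1) : Phi E ψ hψ1 (1 : G) = 1 := by
  apply Equiv.ext
  intro z
  rw [Phi_apply, T_good E ψ hψ1 (good_one E z.1)]
  rw [Fm_apply E ψ (good_one E z.1)]
  apply Prod.ext
  · apply Prod.ext
    · apply Subtype.ext
      show ((1 : G) : G ⧸ N) * (z.1.1 : G ⧸ N) = (z.1.1 : G ⧸ N)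
      rw [QuotientGroup.mk_one, one_mul]
    · show ψ (coc 1 z.1.1) z.1.2 = z.1.2
      rw [coc_one, hψone]; rfl
  · rfl

lemma Phi_inv (g : G) : Phi E ψ hψ1 g⁻¹ = (Phi E ψ hψ1 g)⁻¹ :=
  Equiv.ext fun _ => rfl

lemma Phi_fpf {FN : Finset N} (hfpf : ∀ m ∈ FN, m ≠ 1 → ∀ b : B, ψ m b ≠ b)
    {g : G} (hg : g ≠ 1) (hmem : ∀ q : {q // q ∈ E}, coc (N := N) g (q : G ⧸ N) ∈ FN)
    (z : ({q // q ∈ E} × B) × Bool) : Phi E ψ hψ1 g z ≠ z := by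
  intro hc
  rw [Phi_apply] at hc
  by_cases h : Good E g z.1
  · rw [T_good E ψ hψ1 h, Fm_apply E ψ h] at hc
    have h1 := congrArg Prod.fst (congrArg Prod.fst hc)
    have h2 := congrArg Prod.snd (congrArg Prod.fst hc)
    have hq : (g : G ⧸ N) * (z.1.1 : G ⧸ N) = (z.1.1 : G ⧸ N) := congrArg Subtype.val h1
    exact hfpf _ (hmem z.1.1) (coc_ne_one hq hg) z.1.2 h2
  · rw [T, dif_neg h] at hc
    by_cases he : bmap E ψ hψ1 g z.1 = z.1
    · rw [if_pos he] at hc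
      have h2 := congrArg Prod.snd hc
      exact (Bool.not_ne_self z.2) h2
    · rw [if_neg he] at hc
      exact he (congrArg Prod.fst hc)

lemma Phi_mul_eq (g₁ g₂ : G) (z : ({q // q ∈ E} × B) × Bool)
    (h2 : Good E g₂ z.1) (h12 : Good E (g₁ * g₂) z.1)
    (hb : ψ (coc (g₁ * g₂) (z.1.1 : G ⧸ N)) z.1.2
        = ψ (coc g₁ ((g₂ : G ⧸ N) * (z.1.1 : G ⧸ N))) (ψ (coc g₂ (z.1.1 : G ⧸ N)) z.1.2)) :
    Phi E ψ hψ1 (g₁ * g₂) z = Phi E ψ hψ1 g₁ (Phi E ψ hψ1 g₂ z) := by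
  have hmm : ((g₁ * g₂ : G) : G ⧸ N) * (z.1.1 : G ⧸ N)
      = (g₁ : G ⧸ N) * ((g₂ : G ⧸ N) * (z.1.1 : G ⧸ N)) := by
    rw [QuotientGroup.mk_mul, mul_assoc]
  simp only [Phi_apply]
  rw [T_good E ψ hψ1 h2, T_good E ψ hψ1 h12]
  rw [Fm_apply E ψ h2]
  have h1 : Good E g₁ ((⟨(g₂ : G ⧸ N) * (z.1.1 : G ⧸ N), h2⟩ : {q // q ∈ E}),
      ψ (coc g₂ z.1.1) z.1.2) := by
    show (g₁ : G ⧸ N) * ((g₂ : G ⧸ N) * (z.1.1 : G ⧸ N)) ∈ E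
    rw [← hmm]; exact h12
  rw [T_good E ψ hψ1 h1]
  rw [Fm_apply E ψ h12, Fm_apply E ψ h1]
  apply Prod.ext
  · apply Prod.ext
    · apply Subtype.ext
      exact hmm
    · exact hb
  · rfl

end Core3


section Counting

lemma card_or_le {α : Type*} [Finite α] (P Q : α → Prop) :
    Nat.card {x // P x ∨ Q x} ≤ Nat.card {x // P x} + Nat.card {x // Q x} := by
  calc Nat.card {x // P x ∨ Q x}
      = Nat.card ↥({x | P x} ∪ {x | Q x}) :=
        Nat.card_congr (Equiv.subtypeEquivRight (fun x => by simp [Set.mem_union]))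
    _ = ({x | P x} ∪ {x | Q x} : Set α).ncard := Nat.card_coe_set_eq _
    _ ≤ ({x | P x} : Set α).ncard + ({x | Q x} : Set α).ncard := Set.ncard_union_le _ _
    _ = Nat.card {x // P x} + Nat.card {x // Q x} := by
        rw [← Nat.card_coe_set_eq, ← Nat.card_coe_set_eq]; rfl

lemma card_mono_pred {α : Type*} [Finite α] {P Q : α → Prop} (h : ∀ x, P x → Q x) :
    Nat.card {x // P x} ≤ Nat.card {x // Q x} := by
  rw [show Nat.card {x // P x} = ({x | P x} : Set α).ncard from Nat.card_coe_set_eq _,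
    show Nat.card {x // Q x} = ({x | Q x} : Set α).ncard from Nat.card_coe_set_eq _]
  exact Set.ncard_le_ncard (fun x hx => h x hx) (Set.toFinite _)

lemma card_pred_fst {α β : Type*} (P : α → Prop) :
    Nat.card {z : (α × β) × Bool // P z.1.1} = Nat.card {a // P a} * (Nat.card β * 2) := by
  have e : {z : (α × β) × Bool // P z.1.1} ≃ {a // P a} × (β × Bool) :=
    { toFun := fun z => (⟨z.1.1.1, z.2⟩, (z.1.1.2, z.1.2))
      invFun := fun p => ⟨((p.1.1, p.2.1), p.2.2), p.1.2⟩
      left_inv := fun z => rfl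
      right_inv := fun p => rfl }
  rw [Nat.card_congr e, Nat.card_prod, Nat.card_prod]
  simp [Nat.card_eq_fintype_card]

lemma card_pred_pair {α β : Type*} (P : α → β → Prop) :
    Nat.card {z : (α × β) × Bool // P z.1.1 z.1.2}
      = Nat.card (Σ a : α, {b // P a b}) * 2 := by
  have e : {z : (α × β) × Bool // P z.1.1 z.1.2} ≃ (Σ a : α, {b // P a b}) × Bool :=
    { toFun := fun z => (⟨z.1.1.1, ⟨z.1.1.2, z.2⟩⟩, z.1.2)
      invFun := fun p => ⟨((p.1.1, p.1.2.1), p.2), p.1.2.2⟩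
      left_inv := fun z => rfl
      right_inv := fun p => rfl }
  rw [Nat.card_congr e, Nat.card_prod]
  simp [Nat.card_eq_fintype_card]

lemma nat_card_sigma {α : Type*} [Fintype α] (f : α → Type*) [∀ a, Fintype (f a)] :
    Nat.card (Σ a, f a) = ∑ a, Nat.card (f a) := by
  simp [Nat.card_eq_fintype_card, Fintype.card_sigma]

lemma card_shift_le (E : Finset (G ⧸ N)) (g : G ⧸ N) :
    Nat.card {q : {q // q ∈ E} // ¬ (g * (q : G ⧸ N) ∈ E)}
      ≤ Nat.card ↥((g * ·) '' (E : Set (G ⧸ N)) \ (E : Set (G ⧸ N))) := by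
  haveI : Finite ↥((g * ·) '' (E : Set (G ⧸ N)) \ (E : Set (G ⧸ N))) :=
    ((E.finite_toSet.image _).subset Set.diff_subset).to_subtype
  refine Nat.card_le_card_of_injective
    (fun q => ⟨g * (q.1 : G ⧸ N), ⟨⟨(q.1 : G ⧸ N), q.1.2, rfl⟩, by simpa using q.2⟩⟩) ?_
  intro a b hab
  simp only [Subtype.mk.injEq] at hab
  exact Subtype.ext (Subtype.ext (mul_left_cancel (congrArg Subtype.val hab)))

end Counting


lemma qa_congr {H A A' : Type*} [Group H] {F : Set H} {ε : ℝ} {φ : H → Equiv.Perm A}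
    (h : IsSpecialQuasiAction F ε φ) (e : A ≃ A') :
    IsSpecialQuasiAction F ε fun g => e.permCongr (φ g) := by
  constructor
  · show e.permCongr (φ 1) = 1
    rw [h.map_one]; ext a; simp [Equiv.permCongr_apply]
  · intro g
    show e.permCongr (φ g⁻¹) = (e.permCongr (φ g))⁻¹
    rw [h.map_inv]
    ext a
    simp only [Equiv.permCongr_apply]
    rfl
  · intro g hg hg1 a hc
    simp only [Equiv.permCongr_apply] at hc
    apply h.fixed_point_free g hg hg1 (e.symm a)
    have := congrArg e.symm hc
    simpa using this
  · intro g₁ h₁ g₂ h₂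
    have hsim := h.approx_mul g₁ h₁ g₂ h₂
    unfold SimilarLE at hsim ⊢
    have hA : Nat.card A' = Nat.card A := Nat.card_congr e.symm
    have hsub : Nat.card {a' : A' // (e.permCongr (φ (g₁ * g₂))) a'
          ≠ ((e.permCongr (φ g₁)) * (e.permCongr (φ g₂))) a'}
        = Nat.card {a : A // (φ (g₁ * g₂)) a ≠ ((φ g₁) * (φ g₂)) a} :=
      (Nat.card_congr (e.subtypeEquiv (fun a => by
        simp [Equiv.permCongr_apply, Equiv.Perm.mul_apply]))).symm
    rw [hsub, hA]
    exact hsim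

end SoficExtensionProof

open SoficExtensionProof

/-- An extension of a sofic group by an amenable group is sofic. -/
theorem isSofic_of_extension {G : Type*} [Group G] (N : Subgroup G) [N.Normal]
    (hN : IsSofic N) (hQ : IsAmenable (G ⧸ N)) : IsSofic G := by
  classical
  intro ε hε0 hε1 F
  set F1 : Finset G := insert 1 F with hF1
  set F2 : Finset G := (F1 ×ˢ F1).image (fun p => p.1 * p.2) with hF2
  have hF12 : ∀ g ∈ F, g ∈ F2 := by
    intro g hg
    exact Finset.mem_image.mpr ⟨(g, 1),
      Finset.mem_product.mpr ⟨Finset.mem_insert_of_mem hg, Finset.mem_insert_self _ _⟩,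
      by simp⟩
  have hFmul : ∀ g₁ ∈ F, ∀ g₂ ∈ F, g₁ * g₂ ∈ F2 := fun g₁ h₁ g₂ h₂ =>
    Finset.mem_image.mpr ⟨(g₁, g₂),
      Finset.mem_product.mpr ⟨Finset.mem_insert_of_mem h₁, Finset.mem_insert_of_mem h₂⟩, rfl⟩
  obtain ⟨E, hEne, hFol⟩ :=
    hQ (F2.image (QuotientGroup.mk : G → G ⧸ N)) (ε/4) (by linarith)
  set EE : Finset (G ⧸ N) :=
    ((F1.image (QuotientGroup.mk : G → G ⧸ N)) ×ˢ E).image (fun p => p.1 * p.2) with hEE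
  have hEEq : ∀ q ∈ E, q ∈ EE := by
    intro q hq
    exact Finset.mem_image.mpr ⟨((1 : G ⧸ N), q),
      Finset.mem_product.mpr ⟨Finset.mem_image.mpr ⟨1, Finset.mem_insert_self _ _, by simp⟩, hq⟩,
      one_mul q⟩
  have hEEg : ∀ g ∈ F1, ∀ q ∈ E, ((g : G ⧸ N) * q) ∈ EE := by
    intro g hg q hq
    exact Finset.mem_image.mpr ⟨((g : G ⧸ N), q),
      Finset.mem_product.mpr ⟨Finset.mem_image.mpr ⟨g, hg, rfl⟩, hq⟩, rfl⟩
  set FN : Finset N := (F2 ×ˢ EE).image (fun p => coc p.1 p.2) with hFNdef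
  obtain ⟨B, hBfin, hBne, ψ, hψ⟩ := hN (ε/4) (by linarith) (by linarith) FN
  haveI : Finite B := hBfin
  haveI : Nonempty B := hBne
  haveI : Nonempty {q // q ∈ E} := ⟨⟨hEne.choose, hEne.choose_spec⟩⟩
  have hψ1 : ∀ m : N, ψ m⁻¹ = (ψ m)⁻¹ := hψ.map_inv
  have base : IsSpecialQuasiAction (F : Set G) ε (Phi E ψ hψ1) := by
    constructor
    · exact Phi_one E ψ hψ1 hψ.map_one
    · exact Phi_inv E ψ hψ1
    · intro g hg hg1 a
      refine Phi_fpf E ψ hψ1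
        (fun m hm hm1 b => hψ.fixed_point_free m (Finset.mem_coe.mpr hm) hm1 b) hg1 ?_ a
      intro q
      exact Finset.mem_image.mpr ⟨(g, (q : G ⧸ N)),
        Finset.mem_product.mpr ⟨hF12 g (Finset.mem_coe.mp hg), hEEq _ q.2⟩, rfl⟩
    · intro g₁ hg₁ g₂ hg₂
      have hg₁' : g₁ ∈ F := Finset.mem_coe.mp hg₁
      have hg₂' : g₂ ∈ F := Finset.mem_coe.mp hg₂
      unfold SimilarLE
      have hmono : ∀ z : ({q // q ∈ E} × B) × Bool,
          (Phi E ψ hψ1 (g₁ * g₂)) z ≠ ((Phi E ψ hψ1 g₁) * (Phi E ψ hψ1 g₂)) z →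
          ((¬ ((g₂ : G ⧸ N) * (z.1.1 : G ⧸ N) ∈ E)) ∨
          ((¬ (((g₁ * g₂ : G) : G ⧸ N) * (z.1.1 : G ⧸ N) ∈ E)) ∨
          (ψ (coc (g₁ * g₂) (z.1.1 : G ⧸ N)) z.1.2
            ≠ ψ (coc g₁ ((g₂ : G ⧸ N) * (z.1.1 : G ⧸ N))) (ψ (coc g₂ (z.1.1 : G ⧸ N)) z.1.2)))) := by
        intro z hz
        by_contra hcon
        push_neg at hcon
        obtain ⟨h2, h12, hb⟩ := hcon
        apply hz
        rw [Equiv.Perm.mul_apply]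
        exact Phi_mul_eq E ψ hψ1 g₁ g₂ z h2 h12 hb
      have step1 : Nat.card {z : ({q // q ∈ E} × B) × Bool //
            (Phi E ψ hψ1 (g₁ * g₂)) z ≠ ((Phi E ψ hψ1 g₁) * (Phi E ψ hψ1 g₂)) z}
          ≤ Nat.card {z : ({q // q ∈ E} × B) × Bool // ¬ ((g₂ : G ⧸ N) * (z.1.1 : G ⧸ N) ∈ E)}
          + (Nat.card {z : ({q // q ∈ E} × B) × Bool //
              ¬ (((g₁ * g₂ : G) : G ⧸ N) * (z.1.1 : G ⧸ N) ∈ E)}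
          + Nat.card {z : ({q // q ∈ E} × B) × Bool //
              ψ (coc (g₁ * g₂) (z.1.1 : G ⧸ N)) z.1.2
              ≠ ψ (coc g₁ ((g₂ : G ⧸ N) * (z.1.1 : G ⧸ N))) (ψ (coc g₂ (z.1.1 : G ⧸ N)) z.1.2)}) := by
        refine le_trans (card_mono_pred hmono) ?_
        refine le_trans (card_or_le _ _) ?_
        exact Nat.add_le_add_left (card_or_le _ _) _
      -- bound the first two sets
      have c1 := card_pred_fst (β := B)
        (fun q : {q // q ∈ E} => ¬ ((g₂ : G ⧸ N) * (q : G ⧸ N) ∈ E))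
      have c2 := card_pred_fst (β := B)
        (fun q : {q // q ∈ E} => ¬ (((g₁ * g₂ : G) : G ⧸ N) * (q : G ⧸ N) ∈ E))
      have b1 : (Nat.card {q : {q // q ∈ E} // ¬ ((g₂ : G ⧸ N) * (q : G ⧸ N) ∈ E)} : ℝ)
          ≤ ε/4 * E.card := by
        refine le_trans (Nat.cast_le.mpr (card_shift_le E (g₂ : G ⧸ N))) ?_
        exact hFol _ (Finset.mem_image.mpr ⟨g₂, hF12 g₂ hg₂', rfl⟩)
      have b2 : (Nat.card {q : {q // q ∈ E} //
            ¬ (((g₁ * g₂ : G) : G ⧸ N) * (q : G ⧸ N) ∈ E)} : ℝ) ≤ ε/4 * E.card := by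
        refine le_trans (Nat.cast_le.mpr (card_shift_le E ((g₁ * g₂ : G) : G ⧸ N))) ?_
        exact hFol _ (Finset.mem_image.mpr ⟨g₁ * g₂, hFmul g₁ hg₁' g₂ hg₂', rfl⟩)
      -- bound the third set
      have c3 := card_pred_pair (α := {q // q ∈ E}) (β := B)
        (fun q b => ψ (coc (g₁ * g₂) (q : G ⧸ N)) b
          ≠ ψ (coc g₁ ((g₂ : G ⧸ N) * (q : G ⧸ N))) (ψ (coc g₂ (q : G ⧸ N)) b))
      haveI : ∀ q : {q // q ∈ E}, Fintype {b : B // ψ (coc (g₁ * g₂) (q : G ⧸ N)) b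
          ≠ ψ (coc g₁ ((g₂ : G ⧸ N) * (q : G ⧸ N))) (ψ (coc g₂ (q : G ⧸ N)) b)} :=
        fun q => Fintype.ofFinite _
      have hsig := nat_card_sigma (fun q : {q // q ∈ E} => {b : B //
        ψ (coc (g₁ * g₂) (q : G ⧸ N)) b
          ≠ ψ (coc g₁ ((g₂ : G ⧸ N) * (q : G ⧸ N))) (ψ (coc g₂ (q : G ⧸ N)) b)})
      have hq : ∀ q : {q // q ∈ E}, (Nat.card {b : B // ψ (coc (g₁ * g₂) (q : G ⧸ N)) b
          ≠ ψ (coc g₁ ((g₂ : G ⧸ N) * (q : G ⧸ N))) (ψ (coc g₂ (q : G ⧸ N)) b)} : ℝ)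
          ≤ ε/4 * Nat.card B := by
        intro q
        have hm1 : coc g₁ ((g₂ : G ⧸ N) * (q : G ⧸ N)) ∈ FN :=
          Finset.mem_image.mpr ⟨(g₁, (g₂ : G ⧸ N) * (q : G ⧸ N)),
            Finset.mem_product.mpr ⟨hF12 g₁ hg₁',
              hEEg g₂ (Finset.mem_insert_of_mem hg₂') _ q.2⟩, rfl⟩
        have hm2 : coc g₂ (q : G ⧸ N) ∈ FN :=
          Finset.mem_image.mpr ⟨(g₂, (q : G ⧸ N)),
            Finset.mem_product.mpr ⟨hF12 g₂ hg₂', hEEq _ q.2⟩, rfl⟩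
        have hsim := hψ.approx_mul _ (Finset.mem_coe.mpr hm1) _ (Finset.mem_coe.mpr hm2)
        unfold SimilarLE at hsim
        have hre : Nat.card {b : B // ψ (coc (g₁ * g₂) (q : G ⧸ N)) b
            ≠ ψ (coc g₁ ((g₂ : G ⧸ N) * (q : G ⧸ N))) (ψ (coc g₂ (q : G ⧸ N)) b)}
            = Nat.card {b : B // ψ (coc g₁ ((g₂ : G ⧸ N) * (q : G ⧸ N)) * coc g₂ (q : G ⧸ N)) b
            ≠ (ψ (coc g₁ ((g₂ : G ⧸ N) * (q : G ⧸ N))) * ψ (coc g₂ (q : G ⧸ N))) b} :=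
          Nat.card_congr (Equiv.subtypeEquivRight (fun b => by
            rw [coc_mul g₁ g₂ (q : G ⧸ N), Equiv.Perm.mul_apply]))
        rw [hre]
        exact hsim
      have b3 : (Nat.card (Σ q : {q // q ∈ E}, {b : B // ψ (coc (g₁ * g₂) (q : G ⧸ N)) b
          ≠ ψ (coc g₁ ((g₂ : G ⧸ N) * (q : G ⧸ N))) (ψ (coc g₂ (q : G ⧸ N)) b)}) : ℝ)
          ≤ (E.card : ℝ) * (ε/4 * Nat.card B) := by
        rw [hsig]
        push_cast
        calc (∑ q : {q // q ∈ E}, (Nat.card {b : B // ψ (coc (g₁ * g₂) (q : G ⧸ N)) b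
              ≠ ψ (coc g₁ ((g₂ : G ⧸ N) * (q : G ⧸ N))) (ψ (coc g₂ (q : G ⧸ N)) b)} : ℝ))
            ≤ ∑ _q : {q // q ∈ E}, (ε/4 * Nat.card B) :=
              Finset.sum_le_sum (fun q _ => hq q)
          _ = (E.card : ℝ) * (ε/4 * Nat.card B) := by
              rw [Finset.sum_const, Finset.card_univ, Fintype.card_coe, nsmul_eq_mul]
      -- total size
      have hA : (Nat.card (({q // q ∈ E} × B) × Bool) : ℝ)
          = (E.card : ℝ) * (Nat.card B : ℝ) * 2 := by
        rw [Nat.card_prod, Nat.card_prod, Nat.card_eq_finsetCard,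
          show Nat.card Bool = 2 from by simp [Nat.card_eq_fintype_card]]
        push_cast
        ring
      -- put everything together
      have hstep1R : (Nat.card {z : ({q // q ∈ E} × B) × Bool //
            (Phi E ψ hψ1 (g₁ * g₂)) z ≠ ((Phi E ψ hψ1 g₁) * (Phi E ψ hψ1 g₂)) z} : ℝ)
          ≤ (Nat.card {z : ({q // q ∈ E} × B) × Bool //
              ¬ ((g₂ : G ⧸ N) * (z.1.1 : G ⧸ N) ∈ E)} : ℝ)
          + ((Nat.card {z : ({q // q ∈ E} × B) × Bool //
              ¬ (((g₁ * g₂ : G) : G ⧸ N) * (z.1.1 : G ⧸ N) ∈ E)} : ℝ)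
          + (Nat.card {z : ({q // q ∈ E} × B) × Bool //
              ψ (coc (g₁ * g₂) (z.1.1 : G ⧸ N)) z.1.2
              ≠ ψ (coc g₁ ((g₂ : G ⧸ N) * (z.1.1 : G ⧸ N)))
                (ψ (coc g₂ (z.1.1 : G ⧸ N)) z.1.2)} : ℝ)) := by
        exact_mod_cast step1
      rw [hA]
      have e1R : (Nat.card {z : ({q // q ∈ E} × B) × Bool //
            ¬ ((g₂ : G ⧸ N) * (z.1.1 : G ⧸ N) ∈ E)} : ℝ)
          ≤ (ε/4 * E.card) * ((Nat.card B : ℝ) * 2) := by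
        rw [c1]
        push_cast
        have : (0 : ℝ) ≤ (Nat.card B : ℝ) * 2 := by positivity
        exact mul_le_mul_of_nonneg_right b1 this
      have e2R : (Nat.card {z : ({q // q ∈ E} × B) × Bool //
            ¬ (((g₁ * g₂ : G) : G ⧸ N) * (z.1.1 : G ⧸ N) ∈ E)} : ℝ)
          ≤ (ε/4 * E.card) * ((Nat.card B : ℝ) * 2) := by
        rw [c2]
        push_cast
        have : (0 : ℝ) ≤ (Nat.card B : ℝ) * 2 := by positivity
        exact mul_le_mul_of_nonneg_right b2 this
      have e3R : (Nat.card {z : ({q // q ∈ E} × B) × Bool //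
            ψ (coc (g₁ * g₂) (z.1.1 : G ⧸ N)) z.1.2
            ≠ ψ (coc g₁ ((g₂ : G ⧸ N) * (z.1.1 : G ⧸ N)))
              (ψ (coc g₂ (z.1.1 : G ⧸ N)) z.1.2)} : ℝ)
          ≤ ((E.card : ℝ) * (ε/4 * Nat.card B)) * 2 := by
        rw [c3]
        push_cast
        exact mul_le_mul_of_nonneg_right b3 (by norm_num)
      have hEnn : (0 : ℝ) ≤ (E.card : ℝ) := Nat.cast_nonneg _
      have hBnn : (0 : ℝ) ≤ (Nat.card B : ℝ) := Nat.cast_nonneg _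
      nlinarith [mul_nonneg hEnn hBnn, mul_nonneg (mul_nonneg hEnn hBnn) hε0.le]
  haveI : Fintype (({q // q ∈ E} × B) × Bool) := Fintype.ofFinite _
  let e := Fintype.equivFin (({q // q ∈ E} × B) × Bool)
  exact ⟨Fin _, inferInstance, ⟨e (Classical.arbitrary _)⟩, _, qa_congr base e⟩
end
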